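/- arXiv:1104.4297 — 12 statements merged into one kernel-verified Lean document; each statement's English description precedes it below -/
import Mathlib

section
/- Let s ≥ 1 and 2 ≤ i ≤ e−1. Let γ = (γ_1,…,γ_e) be an e-tuple of formal power series in K⟦t⟧ such that E_{jh}(γ) ≡ 0 mod t^{2s} for all pairs 1 ≤ j < h−1 ≤ e−1, and such that ord(γ_i) = ord(γ_{i+1}) = s. Then ord(γ_j) ≥ s for every j = 1,…,e. Conversely, if ord(γ_j) ≥ s for all j = 1,…,e, then E_{jh}(γ) ≡ 0 mod t^{2s} for all pairs 1 ≤ j < h−1 ≤ e−1. -/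
open MvPolynomial

/-- The Riemenschneider quasi-determinantal equation
`E_{ij} = x_i x_j - x_{i+1} (∏_{n=i+1}^{j-1} x_n^{c_n - 2}) x_{j-1}`
of the affine toric surface determined by the integers `c`. -/
noncomputable def E (K : Type*) [Field K] (c : ℕ → ℕ) (i j : ℕ) : MvPolynomial ℕ K :=
  X i * X j - X (i + 1) * (∏ n ∈ Finset.Ico (i + 1) j, X n ^ (c n - 2)) * X (j - 1)

section Aux

variable {K : Type*} [Field K]

lemma order_neg' (φ : PowerSeries K) : (-φ).order = φ.order := by
  have h1 : ((-1 : PowerSeries K)).order = 0 := by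
    refine le_antisymm ?_ zero_le
    have := PowerSeries.order_le (φ := (-1 : PowerSeries K)) 0 (by simp)
    simpa using this
  have := PowerSeries.order_mul (-1 : PowerSeries K) φ
  rw [neg_one_mul, h1, zero_add] at this
  exact this

lemma aeval_E (c : ℕ → ℕ) (j h : ℕ) (γ : ℕ → PowerSeries K) :
    MvPolynomial.aeval γ (E K c j h) =
      γ j * γ h - γ (j+1) * (∏ n ∈ Finset.Ico (j+1) h, γ n ^ (c n - 2)) * γ (h-1) := by
  simp [E]

lemma cast2s (s : ℕ) : ((2*s : ℕ) : ℕ∞) = (s : ℕ∞) + (s : ℕ∞) := by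
  push_cast; ring

lemma key (c : ℕ → ℕ) (γ : ℕ → PowerSeries K) (s j h : ℕ)
    (hE : ((2*s : ℕ) : ℕ∞) ≤ (MvPolynomial.aeval γ (E K c j h)).order)
    (h1 : (s : ℕ∞) ≤ (γ (j+1)).order)
    (h2 : (s : ℕ∞) ≤ (γ (h-1)).order) :
    (s:ℕ∞) + (s:ℕ∞) ≤ (γ j).order + (γ h).order := by
  set B := γ (j+1) * (∏ n ∈ Finset.Ico (j+1) h, γ n ^ (c n - 2)) * γ (h-1) with hBdef
  have hB : (s:ℕ∞) + (s:ℕ∞) ≤ B.order := by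
    rw [hBdef, PowerSeries.order_mul, PowerSeries.order_mul]
    calc (s:ℕ∞) + (s:ℕ∞) = ((s:ℕ∞) + 0) + (s:ℕ∞) := by rw [add_zero]
    _ ≤ ((γ (j+1)).order + (∏ n ∈ Finset.Ico (j+1) h, γ n ^ (c n - 2)).order) + (γ (h-1)).order :=
        add_le_add (add_le_add h1 zero_le) h2
  have heq : γ j * γ h = MvPolynomial.aeval γ (E K c j h) + B := by
    rw [aeval_E]; ring
  rw [← PowerSeries.order_mul, heq]
  refine le_trans ?_ (PowerSeries.min_order_le_order_add _ _)
  rw [le_min_iff]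
  exact ⟨le_trans (le_of_eq (cast2s s).symm) hE, hB⟩

lemma cancel {a : ℕ∞} {s : ℕ} (h : (s:ℕ∞) + (s:ℕ∞) ≤ a + (s:ℕ∞)) : (s:ℕ∞) ≤ a :=
  (WithTop.add_le_add_iff_right (by exact WithTop.coe_ne_top)).mp h

lemma cancel' {a : ℕ∞} {s : ℕ} (h : (s:ℕ∞) + (s:ℕ∞) ≤ (s:ℕ∞) + a) : (s:ℕ∞) ≤ a := by
  apply cancel; rwa [add_comm (s:ℕ∞) a] at h

end Aux

/-- Lemma 4.1: if `γ` satisfies all equations `E_{jh}` mod `t^{2s}` and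
`ord(γ_i) = ord(γ_{i+1}) = s` for some `2 ≤ i ≤ e-1`, then `ord(γ_j) ≥ s` for all
`1 ≤ j ≤ e`; conversely, if `ord(γ_j) ≥ s` for all `j`, then all the equations
`E_{jh}` vanish mod `t^{2s}`. -/
theorem order_ge_of_contact_and_converse (K : Type*) [Field K] (e : ℕ) (he : 4 ≤ e)
    (c : ℕ → ℕ) (hc : ∀ i, 2 ≤ i → i + 1 ≤ e → 2 ≤ c i)
    (s : ℕ) (hs : 1 ≤ s) (i : ℕ) (hi2 : 2 ≤ i) (hie : i + 1 ≤ e) :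
    (∀ γ : ℕ → PowerSeries K,
      (∀ j h : ℕ, 1 ≤ j → j + 2 ≤ h → h ≤ e →
        ((2 * s : ℕ) : ℕ∞) ≤ (MvPolynomial.aeval γ (E K c j h)).order) →
      (γ i).order = (s : ℕ∞) → (γ (i + 1)).order = (s : ℕ∞) →
      ∀ j : ℕ, 1 ≤ j → j ≤ e → ((s : ℕ) : ℕ∞) ≤ (γ j).order) ∧
    (∀ γ : ℕ → PowerSeries K,
      (∀ j : ℕ, 1 ≤ j → j ≤ e → ((s : ℕ) : ℕ∞) ≤ (γ j).order) →
      ∀ j h : ℕ, 1 ≤ j → j + 2 ≤ h → h ≤ e →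
        ((2 * s : ℕ) : ℕ∞) ≤ (MvPolynomial.aeval γ (E K c j h)).order) := by
  constructor
  · intro γ hE hio hi1o
    have h2fix : (s:ℕ∞) ≤ (γ (i+1-1)).order := by
      simpa using le_of_eq hio.symm
    have down : ∀ d j, j + d = i → 1 ≤ j → (s:ℕ∞) ≤ (γ j).order := by
      intro d
      induction d with
      | zero =>
        intro j hj _
        have : j = i := by omega
        rw [this, hio]
      | succ d ih =>
        intro j hj hj1
        have h1 := ih (j+1) (by omega) (by omega)
        have hEq := hE j (i+1) hj1 (by omega) hie
        have hk := key c γ s j (i+1) hEq h1 h2fix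
        rw [hi1o] at hk
        exact cancel hk
    have up : ∀ d j, i + 1 + d = j → j ≤ e → (s:ℕ∞) ≤ (γ j).order := by
      intro d
      induction d with
      | zero =>
        intro j hj _
        have : j = i + 1 := by omega
        rw [this, hi1o]
      | succ d ih =>
        intro j hj hje
        have h2 := ih (j-1) (by omega) (by omega)
        have hEq := hE i j (by omega) (by omega) hje
        have hk := key c γ s i j hEq (le_of_eq hi1o.symm) h2
        rw [hio] at hk
        exact cancel' hk
    intro j hj1 hje
    rcases le_or_gt j i with hji | hji
    · exact down (i - j) j (by omega) hj1
    · exact up (j - (i+1)) j (by omega) hje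
  · intro γ hord j h hj1 hjh hhe
    have hA : (s:ℕ∞) + (s:ℕ∞) ≤ (γ j * γ h).order := by
      rw [PowerSeries.order_mul]
      exact add_le_add (hord j hj1 (by omega)) (hord h (by omega) hhe)
    have hB : (s:ℕ∞) + (s:ℕ∞) ≤
        (γ (j+1) * (∏ n ∈ Finset.Ico (j+1) h, γ n ^ (c n - 2)) * γ (h-1)).order := by
      rw [PowerSeries.order_mul, PowerSeries.order_mul]
      calc (s:ℕ∞) + (s:ℕ∞) = ((s:ℕ∞) + 0) + (s:ℕ∞) := by rw [add_zero]
      _ ≤ _ := add_le_add (add_le_add (hord (j+1) (by omega) (by omega)) zero_le)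
            (hord (h-1) (by omega) (by omega))
    rw [aeval_E, sub_eq_add_neg, cast2s]
    refine le_trans ?_ (PowerSeries.min_order_le_order_add _ _)
    rw [le_min_iff, order_neg']
    exact ⟨hA, hB⟩
end

section
/- Let m, s be integers with m ≥ 2s−1 ≥ 1, let 2 ≤ i ≤ e−1, and let l be an integer with s ≤ l ≤ min((c_i−1)s, (m+1)−s). Let γ = (γ_1,…,γ_e) be an e-tuple of formal power series in K⟦t⟧ such that E_{jh}(γ) ≡ 0 mod t^{m+1} for all pairs 1 ≤ j < h−1 ≤ e−1, and such that ord(γ_i) = s and ord(γ_{i+1}) = l. Then ord(γ_j) ≥ s for every j = 1,…,e. -/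
open MvPolynomial

private lemma order_neg'_s5 {R : Type*} [Ring R] (f : PowerSeries R) :
    (-f).order = f.order := by
  refine le_antisymm (PowerSeries.le_order _ _ fun i hi => ?_)
    (PowerSeries.le_order _ _ fun i hi => ?_)
  · simpa using PowerSeries.coeff_of_lt_order i hi
  · simpa using PowerSeries.coeff_of_lt_order i hi

private lemma order_eq_of_sub {R : Type*} [Ring R] {A B : PowerSeries R} {N : ℕ}
    (h : ((N : ℕ) : ℕ∞) ≤ (A - B).order) (hA : A.order < ((N : ℕ) : ℕ∞)) :
    A.order = B.order := by
  have hA' : A.order < (A - B).order := lt_of_lt_of_le hA h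
  have h1 : A.order ≤ B.order := by
    have hmin := PowerSeries.min_order_le_order_add A (-(A - B))
    have hAB : A + -(A - B) = B := by abel
    rw [hAB, order_neg'_s5] at hmin
    calc A.order = min A.order (A - B).order := (min_eq_left hA'.le).symm
      _ ≤ B.order := hmin
  refine le_antisymm h1 ?_
  by_contra hlt
  push_neg at hlt
  have h2 : min B.order (A - B).order ≤ A.order := by
    have hmin := PowerSeries.min_order_le_order_add B (A - B)
    have hAB : B + (A - B) = A := by abel
    rwa [hAB] at hmin
  exact absurd h2 (not_le.mpr (lt_min hlt hA'))

private lemma order_pow_le {K : Type*} [Field K] {f : PowerSeries K} {s : ℕ}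
    (hf : f.order = (s : ℕ∞)) (n : ℕ) : ((n * s : ℕ) : ℕ∞) ≤ (f ^ n).order := by
  induction n with
  | zero => simp
  | succ n ih =>
    rw [pow_succ, PowerSeries.order_mul, hf]
    calc (((n + 1) * s : ℕ) : ℕ∞) = ((n * s : ℕ) : ℕ∞) + ((s : ℕ) : ℕ∞) := by
          push_cast; ring
      _ ≤ (f ^ n).order + ((s : ℕ) : ℕ∞) := add_le_add ih le_rfl

/-- Lemma 4.2: if `m ≥ 2s-1 ≥ 1`, `2 ≤ i ≤ e-1`, `s ≤ l ≤ min((c_i-1)s, (m+1)-s)`,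
and `γ` satisfies all the equations `E_{jh}` mod `t^{m+1}` with `ord(γ_i) = s`,
`ord(γ_{i+1}) = l`, then `ord(γ_j) ≥ s` for all `1 ≤ j ≤ e`. -/
theorem order_ge_of_contact (K : Type*) [Field K] (e : ℕ) (he : 4 ≤ e)
    (c : ℕ → ℕ) (hc : ∀ i, 2 ≤ i → i + 1 ≤ e → 2 ≤ c i)
    (m s : ℕ) (hs : 1 ≤ s) (hm : 2 * s - 1 ≤ m)
    (i : ℕ) (hi2 : 2 ≤ i) (hie : i + 1 ≤ e)
    (l : ℕ) (hsl : s ≤ l) (hl : l ≤ min ((c i - 1) * s) ((m + 1) - s))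
    (γ : ℕ → PowerSeries K)
    (hE : ∀ j h : ℕ, 1 ≤ j → j + 2 ≤ h → h ≤ e →
      ((m + 1 : ℕ) : ℕ∞) ≤ (MvPolynomial.aeval γ (E K c j h)).order)
    (hγi : (γ i).order = (s : ℕ∞)) (hγi1 : (γ (i + 1)).order = (l : ℕ∞)) :
    ∀ j : ℕ, 1 ≤ j → j ≤ e → ((s : ℕ) : ℕ∞) ≤ (γ j).order := by
  have hci : 2 ≤ c i := hc i hi2 hie
  have hl1 : l ≤ (c i - 1) * s := le_trans hl (min_le_left _ _)
  have hl2 : l ≤ m + 1 - s := le_trans hl (min_le_right _ _)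
  have hsm1 : s ≤ m + 1 := by omega
  have hEval : ∀ j h : ℕ, (MvPolynomial.aeval γ (E K c j h)) =
      γ j * γ h - γ (j + 1) * (∏ n ∈ Finset.Ico (j + 1) h, γ n ^ (c n - 2)) * γ (h - 1) := by
    intro j h
    simp [E, map_sub, map_mul, map_prod]
  -- extract a finite order below s
  have hfin : ∀ j : ℕ, (γ j).order < ((s : ℕ) : ℕ∞) →
      ∃ u : ℕ, (γ j).order = (u : ℕ∞) ∧ u < s := by
    intro j hj
    cases hord : (γ j).order with
    | top => rw [hord] at hj; exact absurd hj (by simp)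
    | coe u =>
      refine ⟨u, rfl, ?_⟩
      rw [hord] at hj
      exact_mod_cast hj
  -- Left claim: descending from i
  have HL : ∀ d : ℕ, 1 ≤ i - d → ((s : ℕ) : ℕ∞) ≤ (γ (i - d)).order := by
    intro d
    induction d with
    | zero => intro _; simp [hγi]
    | succ d ih =>
      intro h1
      set j := i - (d + 1) with hj
      have hjlt : j + 1 = i - d := by omega
      have hji : j + 1 ≤ i := by omega
      by_contra hcon
      push_neg at hcon
      obtain ⟨u, hu, hus⟩ := hfin j hcon
      have hEj := hE j (i + 1) (by omega) (by omega) hie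
      rw [hEval] at hEj
      have hAord : (γ j * γ (i + 1)).order = ((u + l : ℕ) : ℕ∞) := by
        rw [PowerSeries.order_mul, hu, hγi1]; push_cast; ring
      have hAlt : (γ j * γ (i + 1)).order < ((m + 1 : ℕ) : ℕ∞) := by
        rw [hAord]
        exact_mod_cast (by omega : u + l < m + 1)
      have hBord := order_eq_of_sub hEj hAlt
      -- compute lower bound for B's order
      have hsplit : (∏ n ∈ Finset.Ico (j + 1) (i + 1), γ n ^ (c n - 2)) =
          (∏ n ∈ Finset.Ico (j + 1) i, γ n ^ (c n - 2)) * γ i ^ (c i - 2) :=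
        Finset.prod_Ico_succ_top hji _
      have hBlow : ((s + ((c i - 2) * s + s) : ℕ) : ℕ∞) ≤
          (γ (j + 1) * (∏ n ∈ Finset.Ico (j + 1) (i + 1), γ n ^ (c n - 2)) * γ (i + 1 - 1)).order := by
        rw [hsplit, show i + 1 - 1 = i from rfl]
        rw [PowerSeries.order_mul, PowerSeries.order_mul, PowerSeries.order_mul, hγi]
        have h1' : ((s : ℕ) : ℕ∞) ≤ (γ (j + 1)).order := by
          rw [show j + 1 = i - d from hjlt]; exact ih (by omega)
        have h2' : (((c i - 2) * s : ℕ) : ℕ∞) ≤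
            ((∏ n ∈ Finset.Ico (j + 1) i, γ n ^ (c n - 2)).order + (γ i ^ (c i - 2)).order) := by
          calc (((c i - 2) * s : ℕ) : ℕ∞) ≤ (γ i ^ (c i - 2)).order := order_pow_le hγi _
            _ ≤ _ := le_add_self
        calc ((s + ((c i - 2) * s + s) : ℕ) : ℕ∞)
            = ((s : ℕ) : ℕ∞) + ((((c i - 2) * s : ℕ) : ℕ∞) + ((s : ℕ) : ℕ∞)) := by
              push_cast; ring
          _ ≤ _ := by
              rw [add_assoc]
              exact add_le_add h1' (add_le_add h2' le_rfl)
      rw [← hBord, hAord] at hBlow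
      have : s + ((c i - 2) * s + s) ≤ u + l := by exact_mod_cast hBlow
      -- contradiction
      have haux : (c i - 1) * s = (c i - 2) * s + s := by
        have : c i - 1 = (c i - 2) + 1 := by omega
        rw [this, add_mul, one_mul]
      nlinarith [hl1, hus, this, haux]
  -- Right claim: ascending from i+1
  have HR : ∀ d : ℕ, i + 1 + d ≤ e → ((s : ℕ) : ℕ∞) ≤ (γ (i + 1 + d)).order := by
    intro d
    induction d with
    | zero =>
      intro _
      rw [hγi1]
      exact_mod_cast hsl
    | succ d ih =>
      intro h1
      set j := i + 1 + (d + 1) with hj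
      by_contra hcon
      push_neg at hcon
      obtain ⟨u, hu, hus⟩ := hfin j hcon
      have hEj := hE i j (by omega) (by omega) (by omega)
      rw [hEval] at hEj
      have hAord : (γ i * γ j).order = ((s + u : ℕ) : ℕ∞) := by
        rw [PowerSeries.order_mul, hγi, hu]; push_cast; ring
      have hAlt : (γ i * γ j).order < ((m + 1 : ℕ) : ℕ∞) := by
        rw [hAord]
        exact_mod_cast (by omega : s + u < m + 1)
      have hBord := order_eq_of_sub hEj hAlt
      have hBlow : ((l + s : ℕ) : ℕ∞) ≤
          (γ (i + 1) * (∏ n ∈ Finset.Ico (i + 1) j, γ n ^ (c n - 2)) * γ (j - 1)).order := by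
        rw [PowerSeries.order_mul, PowerSeries.order_mul, hγi1]
        have h1' : ((s : ℕ) : ℕ∞) ≤ (γ (j - 1)).order := by
          rw [show j - 1 = i + 1 + d by omega]; exact ih (by omega)
        calc ((l + s : ℕ) : ℕ∞) = ((l : ℕ) : ℕ∞) + 0 + ((s : ℕ) : ℕ∞) := by push_cast; ring
          _ ≤ _ := add_le_add (add_le_add le_rfl zero_le) h1'
      rw [← hBord, hAord] at hBlow
      have : l + s ≤ s + u := by exact_mod_cast hBlow
      omega
  intro j hj1 hje
  rcases le_or_gt j i with h | h
  · have := HL (i - j) (by omega)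
    rwa [show i - (i - j) = j by omega] at this
  · have := HR (j - (i + 1)) (by omega)
    rwa [show i + 1 + (j - (i + 1)) = j by omega] at this
end

section
/- Let m, s be integers with m ≥ 2s−1 ≥ 1 and let 2 ≤ i ≤ e−1. Let γ = (γ_1,…,γ_e) be an e-tuple of formal power series in K⟦t⟧ such that: ord(γ_j) ≥ s for all j = 1,…,e; ord(γ_i) = s; E_{i−1,i+1}(γ) ≡ 0 mod t^{m+1}; E_{j,i}(γ) ≡ 0 mod t^{m+1} for all 1 ≤ j < i−1; and E_{i,j}(γ) ≡ 0 mod t^{m+1} for all j with i < j−1 ≤ e−1. Then E_{jh}(γ) ≡ 0 mod t^{m+1} for ALL pairs 1 ≤ j < h−1 ≤ e−1. -/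
open MvPolynomial

lemma aevalE (K : Type*) [Field K] (c : ℕ → ℕ) (γ : ℕ → PowerSeries K) (j h : ℕ) :
    MvPolynomial.aeval γ (E K c j h)
      = γ j * γ h - γ (j+1) * (∏ n ∈ Finset.Ico (j+1) h, γ n ^ (c n - 2)) * γ (h-1) := by
  simp [E]

lemma ordmul {K : Type*} [Field K] {x y : PowerSeries K} {a b : ℕ∞}
    (hx : a ≤ x.order) (hy : b ≤ y.order) : a + b ≤ (x*y).order := by
  rw [PowerSeries.order_mul]; exact add_le_add hx hy

lemma ordmul0 {K : Type*} [Field K] {x : PowerSeries K} (y : PowerSeries K) {a : ℕ∞}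
    (hx : a ≤ x.order) : a ≤ (x*y).order := by
  rw [PowerSeries.order_mul]; exact le_trans hx le_self_add

lemma ordmul0' {K : Type*} [Field K] (x : PowerSeries K) {y : PowerSeries K} {a : ℕ∞}
    (hy : a ≤ y.order) : a ≤ (x*y).order := by
  rw [PowerSeries.order_mul]; exact le_trans hy le_add_self

lemma ordsub {K : Type*} [Field K] {x y : PowerSeries K} {N : ℕ∞}
    (hx : N ≤ x.order) (hy : N ≤ y.order) : N ≤ (x - y).order := by
  apply PowerSeries.le_order
  intro n hn
  rw [map_sub, PowerSeries.coeff_of_lt_order n (lt_of_lt_of_le hn hx),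
    PowerSeries.coeff_of_lt_order n (lt_of_lt_of_le hn hy), sub_zero]

lemma ordadd {K : Type*} [Field K] {x y : PowerSeries K} {N : ℕ∞}
    (hx : N ≤ x.order) (hy : N ≤ y.order) : N ≤ (x + y).order :=
  le_trans (le_min hx hy) (PowerSeries.min_order_le_order_add x y)

lemma ordcancel {K : Type*} [Field K] {u X : PowerSeries K} {s : ℕ} {N : ℕ∞}
    (hu : u.order = (s : ℕ∞)) (h : (s : ℕ∞) + N ≤ (u * X).order) : N ≤ X.order := by
  rw [PowerSeries.order_mul, hu] at h
  exact (WithTop.add_le_add_iff_left (by simp : (s : ℕ∞) ≠ ⊤)).mp h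

/-- Lemma 4.3: if `ord(γ_j) ≥ s` for all `j`, `ord(γ_i) = s`, and the equations
`E_{i-1,i+1}`, `E_{j,i}` (for `1 ≤ j < i-1`) and `E_{i,j}` (for `i < j-1 ≤ e-1`)
vanish mod `t^{m+1}`, then ALL the equations `E_{jh}` vanish mod `t^{m+1}`. -/
theorem all_equations_of_some (K : Type*) [Field K] (e : ℕ) (he : 4 ≤ e)
    (c : ℕ → ℕ) (hc : ∀ i, 2 ≤ i → i + 1 ≤ e → 2 ≤ c i)
    (m s : ℕ) (hs : 1 ≤ s) (hm : 2 * s - 1 ≤ m)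
    (i : ℕ) (hi2 : 2 ≤ i) (hie : i + 1 ≤ e)
    (γ : ℕ → PowerSeries K)
    (hord : ∀ j : ℕ, 1 ≤ j → j ≤ e → ((s : ℕ) : ℕ∞) ≤ (γ j).order)
    (hγi : (γ i).order = (s : ℕ∞))
    (hEi : ((m + 1 : ℕ) : ℕ∞) ≤ (MvPolynomial.aeval γ (E K c (i - 1) (i + 1))).order)
    (hElow : ∀ j : ℕ, 1 ≤ j → j + 2 ≤ i →
      ((m + 1 : ℕ) : ℕ∞) ≤ (MvPolynomial.aeval γ (E K c j i)).order)
    (hEhigh : ∀ j : ℕ, i + 2 ≤ j → j ≤ e →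
      ((m + 1 : ℕ) : ℕ∞) ≤ (MvPolynomial.aeval γ (E K c i j)).order) :
    ∀ j h : ℕ, 1 ≤ j → j + 2 ≤ h → h ≤ e →
      ((m + 1 : ℕ) : ℕ∞) ≤ (MvPolynomial.aeval γ (E K c j h)).order := by
  intro j h hj1 hjh hhe
  rcases lt_trichotomy h i with hhi | rfl | hhi
  · -- Case A : h < i.  `γ_i E_{jh} = γ_h E_{ji} - γ_{j+1} P(j+1,h) E_{h-1,i}`
    apply ordcancel hγi
    have key : γ i * MvPolynomial.aeval γ (E K c j h)
        = γ h * MvPolynomial.aeval γ (E K c j i)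
          - (γ (j+1) * ∏ n ∈ Finset.Ico (j+1) h, γ n ^ (c n - 2))
            * MvPolynomial.aeval γ (E K c (h-1) i) := by
      rw [aevalE, aevalE, aevalE, show h - 1 + 1 = h from by omega,
        ← Finset.prod_Ico_consecutive (fun n => γ n ^ (c n - 2))
          (show j+1 ≤ h by omega) (show h ≤ i by omega)]
      ring
    rw [key]
    exact ordsub (ordmul (hord h (by omega) (by omega)) (hElow j hj1 (by omega)))
      (ordmul (ordmul0 _ (hord (j+1) (by omega) (by omega)))
        (hElow (h-1) (by omega) (by omega)))
  · -- Case B : h = i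
    exact hElow j hj1 hjh
  · -- h > i
    rcases lt_trichotomy j i with hji | rfl | hji
    · -- j < i
      rcases eq_or_lt_of_le (Nat.succ_le_of_lt hji) with hj | hj
      · -- j = i - 1
        obtain rfl : j = i - 1 := by omega
        rcases eq_or_lt_of_le (Nat.succ_le_of_lt hhi) with hh | hh
        · -- h = i + 1
          obtain rfl : h = i + 1 := by omega
          exact hEi
        · -- Case E : j = i-1, h ≥ i+2
          apply ordcancel hγi
          have key : γ i * MvPolynomial.aeval γ (E K c (i-1) h)
              = γ (i-1) * MvPolynomial.aeval γ (E K c i h)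
                + ((∏ n ∈ Finset.Ico (i+1) h, γ n ^ (c n - 2)) * γ (h-1))
                  * MvPolynomial.aeval γ (E K c (i-1) (i+1)) := by
            rw [aevalE, aevalE, aevalE, show i - 1 + 1 = i from by omega,
              show i + 1 - 1 = i from by omega,
              Finset.prod_eq_prod_Ico_succ_bot (show i < h by omega)
                (fun n => γ n ^ (c n - 2)),
              show Finset.Ico i (i+1) = {i} from by
                exact Nat.Ico_succ_singleton i,
              Finset.prod_singleton]
            ring
          rw [key]
          exact ordadd (ordmul (hord (i-1) (by omega) (by omega))
              (hEhigh h (by omega) hhe))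
            (ordmul (ordmul0' _ (hord (h-1) (by omega) (by omega))) hEi)
      · -- j + 2 ≤ i
        have hji2 : j + 2 ≤ i := by omega
        rcases eq_or_lt_of_le (Nat.succ_le_of_lt hhi) with hh | hh
        · -- Case D : h = i + 1
          obtain rfl : h = i + 1 := by omega
          apply ordcancel hγi
          have key : γ i * MvPolynomial.aeval γ (E K c j (i+1))
              = γ (i+1) * MvPolynomial.aeval γ (E K c j i)
                + (γ (j+1) * ∏ n ∈ Finset.Ico (j+1) i, γ n ^ (c n - 2))
                  * MvPolynomial.aeval γ (E K c (i-1) (i+1)) := by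
            rw [aevalE, aevalE, aevalE, show i - 1 + 1 = i from by omega,
              show i + 1 - 1 = i from by omega,
              Finset.prod_Ico_succ_top (show j+1 ≤ i by omega) (fun n => γ n ^ (c n - 2)),
              show Finset.Ico i (i+1) = {i} from by
                exact Nat.Ico_succ_singleton i,
              Finset.prod_singleton]
            ring
          rw [key]
          exact ordadd (ordmul (hord (i+1) (by omega) (by omega)) (hElow j hj1 hji2))
            (ordmul (ordmul0 _ (hord (j+1) (by omega) (by omega))) hEi)
        · -- Case F : j + 2 ≤ i, h ≥ i + 2
          apply ordcancel hγi
          apply ordcancel hγi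
          have key : γ i * (γ i * MvPolynomial.aeval γ (E K c j h))
              = γ i * (γ h * MvPolynomial.aeval γ (E K c j i))
                + γ (j+1) * (((∏ n ∈ Finset.Ico (j+1) i, γ n ^ (c n - 2)) * γ (i-1))
                    * MvPolynomial.aeval γ (E K c i h))
                + γ (j+1) * ((((∏ n ∈ Finset.Ico (j+1) i, γ n ^ (c n - 2))
                      * ∏ n ∈ Finset.Ico (i+1) h, γ n ^ (c n - 2)) * γ (h-1))
                    * MvPolynomial.aeval γ (E K c (i-1) (i+1))) := by
            rw [aevalE, aevalE, aevalE, aevalE, show i - 1 + 1 = i from by omega,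
              show i + 1 - 1 = i from by omega,
              ← Finset.prod_Ico_consecutive (fun n => γ n ^ (c n - 2))
                (show j+1 ≤ i by omega) (show i ≤ h by omega),
              Finset.prod_eq_prod_Ico_succ_bot (show i < h by omega)
                (fun n => γ n ^ (c n - 2)),
              show Finset.Ico i (i+1) = {i} from by
                exact Nat.Ico_succ_singleton i,
              Finset.prod_singleton]
            ring
          rw [key]
          refine ordadd (ordadd ?_ ?_) ?_
          · exact ordmul (hord i (by omega) (by omega))
              (ordmul (hord h (by omega) (by omega)) (hElow j hj1 hji2))
          · exact ordmul (hord (j+1) (by omega) (by omega))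
              (ordmul (ordmul0' _ (hord (i-1) (by omega) (by omega)))
                (hEhigh h (by omega) hhe))
          · exact ordmul (hord (j+1) (by omega) (by omega))
              (ordmul (ordmul0' _ (hord (h-1) (by omega) (by omega))) hEi)
    · -- Case G : j = i
      exact hEhigh h hjh hhe
    · -- Case H : j > i
      apply ordcancel hγi
      have key : γ i * MvPolynomial.aeval γ (E K c j h)
          = γ j * MvPolynomial.aeval γ (E K c i h)
            - ((∏ n ∈ Finset.Ico (j+1) h, γ n ^ (c n - 2)) * γ (h-1))
              * MvPolynomial.aeval γ (E K c i (j+1)) := by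
        rw [aevalE, aevalE, aevalE, show j + 1 - 1 = j from by omega,
          ← Finset.prod_Ico_consecutive (fun n => γ n ^ (c n - 2))
            (show i+1 ≤ j+1 by omega) (show j+1 ≤ h by omega)]
        ring
      rw [key]
      exact ordsub (ordmul (hord j (by omega) (by omega)) (hEhigh h (by omega) hhe))
        (ordmul (ordmul0' _ (hord (h-1) (by omega) (by omega)))
          (hEhigh (j+1) (by omega) (by omega)))
end

section
/- For all integers i, j, h with 1 ≤ i < j < h−1 ≤ e−1, the following identity holds in K[x_1,…,x_e]: x_i·E_{jh} − x_j·E_{ih} + (∏_{n=j+1}^{h−1} x_n^{c_n−2})·x_{h−1}·E_{i,j+1} = 0. -/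
open MvPolynomial

/-- Syzygy (4.1): for `1 ≤ i < j < h-1 ≤ e-1`,
`x_i E_{jh} - x_j E_{ih} + (∏_{n=j+1}^{h-1} x_n^{c_n-2}) x_{h-1} E_{i,j+1} = 0`. -/
theorem syzygy_4_1 (K : Type*) [Field K] (e : ℕ) (he : 4 ≤ e) (c : ℕ → ℕ)
    (hc : ∀ i, 2 ≤ i → i + 1 ≤ e → 2 ≤ c i)
    (i j h : ℕ) (hi : 1 ≤ i) (hij : i < j) (hjh : j + 2 ≤ h) (hhe : h ≤ e) :
    X i * E K c j h - X j * E K c i h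
      + (∏ n ∈ Finset.Ico (j + 1) h, X n ^ (c n - 2)) * X (h - 1) * E K c i (j + 1) = 0 := by
  unfold E
  rw [← Finset.prod_Ico_consecutive (fun n => (X n : MvPolynomial ℕ K) ^ (c n - 2))
    (show i + 1 ≤ j + 1 by omega) (show j + 1 ≤ h by omega)]
  simp only [Nat.add_sub_cancel]
  ring
end

section
/- For all integers i, j, h with 1 ≤ j < h−1 and h < i ≤ e, the following identity holds in K[x_1,…,x_e]: x_i·E_{jh} − x_h·E_{ji} + x_{j+1}·(∏_{n=j+1}^{h−1} x_n^{c_n−2})·E_{h−1,i} = 0. -/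
open MvPolynomial

/-- Syzygy (4.2): for `1 ≤ j < h-1` and `h < i ≤ e`,
`x_i E_{jh} - x_h E_{ji} + x_{j+1} (∏_{n=j+1}^{h-1} x_n^{c_n-2}) E_{h-1,i} = 0`. -/
theorem syzygy_4_2 (K : Type*) [Field K] (e : ℕ) (he : 4 ≤ e) (c : ℕ → ℕ)
    (hc : ∀ i, 2 ≤ i → i + 1 ≤ e → 2 ≤ c i)
    (i j h : ℕ) (hj : 1 ≤ j) (hjh : j + 2 ≤ h) (hhi : h < i) (hie : i ≤ e) :
    X i * E K c j h - X h * E K c j i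
      + X (j + 1) * (∏ n ∈ Finset.Ico (j + 1) h, X n ^ (c n - 2)) * E K c (h - 1) i = 0 := by
  have h1 : 1 ≤ h := by omega
  have hsub : h - 1 + 1 = h := Nat.sub_add_cancel h1
  have hsplit : (∏ n ∈ Finset.Ico (j + 1) h, X n ^ (c n - 2)) *
      (∏ n ∈ Finset.Ico h i, X n ^ (c n - 2)) =
      (∏ n ∈ Finset.Ico (j + 1) i, (X n : MvPolynomial ℕ K) ^ (c n - 2)) :=
    Finset.prod_Ico_consecutive _ (by omega) (by omega)
  simp only [E, hsub]
  ring_nf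
  ring_nf at hsplit
  rw [← hsplit]
  ring
end

section
/- For all integers i, j with 1 ≤ j < i−1 and i+1 ≤ e, the following identity holds in K[x_1,…,x_e]: x_{i+1}·E_{j,i} − x_i·E_{j,i+1} + x_{j+1}·(∏_{n=j+1}^{i−1} x_n^{c_n−2})·E_{i−1,i+1} = 0. -/
open MvPolynomial

/-- Syzygy (4.3): for `1 ≤ j < i-1` and `i+1 ≤ e`,
`x_{i+1} E_{j,i} - x_i E_{j,i+1} + x_{j+1} (∏_{n=j+1}^{i-1} x_n^{c_n-2}) E_{i-1,i+1} = 0`. -/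
theorem syzygy_4_3 (K : Type*) [Field K] (e : ℕ) (he : 4 ≤ e) (c : ℕ → ℕ)
    (hc : ∀ i, 2 ≤ i → i + 1 ≤ e → 2 ≤ c i)
    (i j : ℕ) (hj : 1 ≤ j) (hji : j + 2 ≤ i) (hie : i + 1 ≤ e) :
    X (i + 1) * E K c j i - X i * E K c j (i + 1)
      + X (j + 1) * (∏ n ∈ Finset.Ico (j + 1) i, X n ^ (c n - 2)) * E K c (i - 1) (i + 1) = 0 := by
  have hi1 : i - 1 + 1 = i := by omega
  have hji' : j + 1 ≤ i := by omega
  simp only [E, hi1, Nat.add_sub_cancel]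
  rw [Finset.prod_Ico_succ_top hji', show Finset.Ico i (i+1) = {i} by
    simp]
  simp only [Finset.prod_singleton]
  ring
end

section
/- For all integers i, h with 2 ≤ i and i+1 < h ≤ e, the following identity holds in K[x_1,…,x_e]: x_{i−1}·E_{i,h} − x_i·E_{i−1,h} + (∏_{n=i+1}^{h−1} x_n^{c_n−2})·x_{h−1}·E_{i−1,i+1} = 0. -/
open MvPolynomial

/-- Syzygy (4.4): for `2 ≤ i` and `i+1 < h ≤ e`,
`x_{i-1} E_{i,h} - x_i E_{i-1,h} + (∏_{n=i+1}^{h-1} x_n^{c_n-2}) x_{h-1} E_{i-1,i+1} = 0`. -/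
theorem syzygy_4_4 (K : Type*) [Field K] (e : ℕ) (he : 4 ≤ e) (c : ℕ → ℕ)
    (hc : ∀ i, 2 ≤ i → i + 1 ≤ e → 2 ≤ c i)
    (i h : ℕ) (hi : 2 ≤ i) (hih : i + 2 ≤ h) (hhe : h ≤ e) :
    X (i - 1) * E K c i h - X i * E K c (i - 1) h
      + (∏ n ∈ Finset.Ico (i + 1) h, X n ^ (c n - 2)) * X (h - 1) * E K c (i - 1) (i + 1) = 0 := by
  have h1 : i - 1 + 1 = i := by omega
  have h2 : i + 1 - 1 = i := rfl
  have hci : 2 ≤ c i := hc i hi (by omega)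
  have hprod : (∏ n ∈ Finset.Ico i h, (X n : MvPolynomial ℕ K) ^ (c n - 2))
      = X i ^ (c i - 2) * ∏ n ∈ Finset.Ico (i + 1) h, X n ^ (c n - 2) :=
    Finset.prod_eq_prod_Ico_succ_bot (by omega) _
  have hIcoi : Finset.Ico i (i + 1) = {i} := by ext n; simp
  simp only [E, h1, h2, hprod, hIcoi, Finset.prod_singleton]
  ring
end

section
/- For all integers i, j, h with 1 ≤ j < i−1 and i+1 < h ≤ e, the following identity holds in K[x_1,…,x_e]: x_j·E_{i,h} − x_i·E_{j,h} + (∏_{n=i+1}^{h−1} x_n^{c_n−2})·x_{h−1}·E_{j,i+1} = 0. -/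
open MvPolynomial

/-- Syzygy (4.5): for `1 ≤ j < i-1` and `i+1 < h ≤ e`,
`x_j E_{i,h} - x_i E_{j,h} + (∏_{n=i+1}^{h-1} x_n^{c_n-2}) x_{h-1} E_{j,i+1} = 0`. -/
theorem syzygy_4_5 (K : Type*) [Field K] (e : ℕ) (he : 4 ≤ e) (c : ℕ → ℕ)
    (hc : ∀ i, 2 ≤ i → i + 1 ≤ e → 2 ≤ c i)
    (i j h : ℕ) (hj : 1 ≤ j) (hji : j + 2 ≤ i) (hih : i + 2 ≤ h) (hhe : h ≤ e) :
    X j * E K c i h - X i * E K c j h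
      + (∏ n ∈ Finset.Ico (i + 1) h, X n ^ (c n - 2)) * X (h - 1) * E K c j (i + 1) = 0 := by
  have hsplit : (∏ n ∈ Finset.Ico (j + 1) (i + 1), X n ^ (c n - 2)) *
      (∏ n ∈ Finset.Ico (i + 1) h, X n ^ (c n - 2)) =
      ∏ n ∈ Finset.Ico (j + 1) h, (X n : MvPolynomial ℕ K) ^ (c n - 2) :=
    Finset.prod_Ico_consecutive _ (by omega) (by omega)
  simp only [E, Nat.add_sub_cancel]
  rw [← hsplit]
  ring
end

section
/- Let 2 ≤ i ≤ e−1 and let s, l be integers with 1 ≤ s ≤ l ≤ (c_i − 1)s. Let a_1,…,a_e be integers satisfying a_i = s, a_{i+1} = l, and the recursion a_{j−1} + a_{j+1} = c_j·a_j for all 2 ≤ j ≤ e−1. Then a_j ≥ s for every j = 1,…,e; moreover the e-tuple of power series γ = (t^{a_1},…,t^{a_e}) in K⟦t⟧ satisfies E_{jh}(γ) = 0 for all pairs 1 ≤ j < h−1 ≤ e−1, ord(γ_i) = s, and ord(γ_{i+1}) = l. -/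
open MvPolynomial

/-- Proposition 4.5: an integer vector `a` with `a_i = s`, `a_{i+1} = l` satisfying the
toric recursion `a_{j-1} + a_{j+1} = c_j a_j` has all entries `≥ s`, and the monomial arc
`γ = (t^{a_1}, …, t^{a_e})` satisfies all the equations `E_{jh}` exactly, with
`ord(γ_i) = s` and `ord(γ_{i+1}) = l`. -/
theorem monomial_arc_on_toric_surface (K : Type*) [Field K] (e : ℕ) (he : 4 ≤ e)
    (c : ℕ → ℕ) (hc : ∀ i, 2 ≤ i → i + 1 ≤ e → 2 ≤ c i)
    (i : ℕ) (hi2 : 2 ≤ i) (hie : i + 1 ≤ e)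
    (s l : ℕ) (hs : 1 ≤ s) (hsl : s ≤ l) (hl : l ≤ (c i - 1) * s)
    (a : ℕ → ℤ) (hai : a i = (s : ℤ)) (hai1 : a (i + 1) = (l : ℤ))
    (hrec : ∀ j : ℕ, 2 ≤ j → j + 1 ≤ e → a (j - 1) + a (j + 1) = (c j : ℤ) * a j) :
    (∀ j : ℕ, 1 ≤ j → j ≤ e → (s : ℤ) ≤ a j) ∧
    (∀ j h : ℕ, 1 ≤ j → j + 2 ≤ h → h ≤ e →
      MvPolynomial.aeval (fun k : ℕ => (PowerSeries.X : PowerSeries K) ^ (a k).toNat)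
        (E K c j h) = 0) ∧
    ((PowerSeries.X : PowerSeries K) ^ (a i).toNat).order = (s : ℕ∞) ∧
    ((PowerSeries.X : PowerSeries K) ^ (a (i + 1)).toNat).order = (l : ℕ∞) := by
  have key_up : ∀ m : ℕ, i + m + 1 ≤ e → (s : ℤ) ≤ a (i + m) ∧ a (i + m) ≤ a (i + m + 1) := by
    intro m
    induction m with
    | zero =>
      intro _
      simp only [Nat.add_zero]
      refine ⟨le_of_eq hai.symm, ?_⟩
      rw [hai, hai1]; exact_mod_cast hsl
    | succ m ih =>
      intro hm
      obtain ⟨h1, h2⟩ := ih (by omega)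
      have hr := hrec (i + m + 1) (by omega) (by omega)
      simp only [Nat.add_sub_cancel] at hr
      have hc' : (2 : ℤ) ≤ (c (i + m + 1) : ℤ) := by exact_mod_cast hc _ (by omega) (by omega)
      have h3 : (s : ℤ) ≤ a (i + m + 1) := le_trans h1 h2
      have h4 : (0 : ℤ) ≤ a (i + m + 1) := le_trans (by positivity) h3
      have h5 : 2 * a (i + m + 1) ≤ (c (i + m + 1) : ℤ) * a (i + m + 1) :=
        mul_le_mul_of_nonneg_right hc' h4
      rw [show i + (m + 1) + 1 = i + m + 1 + 1 by ring, show i + (m + 1) = i + m + 1 by ring]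
      exact ⟨h3, by linarith⟩
  have key_dn : ∀ m : ℕ, m + 2 ≤ i → (s : ℤ) ≤ a (i - m - 1) ∧ a (i - m) ≤ a (i - m - 1) := by
    intro m
    induction m with
    | zero =>
      intro hm
      have hr := hrec i hi2 hie
      have hcn : 2 ≤ c i := hc i hi2 hie
      have hl' : (l : ℤ) ≤ ((c i : ℤ) - 1) * s := by
        zify [show 1 ≤ c i by omega] at hl; exact hl
      rw [hai, hai1] at hr
      simp only [Nat.sub_zero]
      have h1 : (s : ℤ) ≤ a (i - 1) := by nlinarith
      exact ⟨h1, by rw [hai]; exact h1⟩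
    | succ m ih =>
      intro hm
      obtain ⟨h1, h2⟩ := ih (by omega)
      have hj : 2 ≤ i - m - 1 := by omega
      have hr := hrec (i - m - 1) hj (by omega)
      rw [show i - m - 1 + 1 = i - m by omega] at hr
      have hc' : (2 : ℤ) ≤ (c (i - m - 1) : ℤ) := by exact_mod_cast hc _ hj (by omega)
      have h4 : (0 : ℤ) ≤ a (i - m - 1) := le_trans (by positivity) h1
      have h5 : 2 * a (i - m - 1) ≤ (c (i - m - 1) : ℤ) * a (i - m - 1) :=
        mul_le_mul_of_nonneg_right hc' h4
      rw [show i - (m + 1) - 1 = i - m - 1 - 1 by omega, show i - (m + 1) = i - m - 1 by omega]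
      exact ⟨by linarith, by linarith⟩
  have part1 : ∀ j : ℕ, 1 ≤ j → j ≤ e → (s : ℤ) ≤ a j := by
    intro j hj1 hje
    rcases lt_trichotomy j i with hji | rfl | hij
    · obtain ⟨h1, _⟩ := key_dn (i - j - 1) (by omega)
      rwa [show i - (i - j - 1) - 1 = j by omega] at h1
    · exact le_of_eq hai.symm
    · rcases Nat.lt_or_ge j e with hje' | hje'
      · obtain ⟨h1, _⟩ := key_up (j - i) (by omega)
        rwa [show i + (j - i) = j by omega] at h1
      · obtain ⟨h1, h2⟩ := key_up (j - i - 1) (by omega)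
        rw [show i + (j - i - 1) = j - 1 by omega] at h1 h2
        rw [show j - 1 + 1 = j by omega] at h2
        linarith
  have ident : ∀ j : ℕ, 1 ≤ j → ∀ h : ℕ, j + 2 ≤ h → h ≤ e →
      a j + a h = a (j + 1) + a (h - 1) + ∑ n ∈ Finset.Ico (j + 1) h, ((c n : ℤ) - 2) * a n := by
    intro j hj1 h hjh
    induction h, hjh using Nat.le_induction with
    | base =>
      intro hhe
      have hr := hrec (j + 1) (by omega) (by omega)
      simp only [Nat.add_sub_cancel] at hr
      rw [show j + 2 - 1 = j + 1 by omega,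
        show Finset.Ico (j + 1) (j + 2) = {j + 1} by
          rw [show j + 2 = (j + 1) + 1 by omega]; exact Nat.Ico_succ_singleton _,
        Finset.sum_singleton]
      linear_combination hr
    | succ h hh ih =>
      intro hhe
      have ih' := ih (by omega)
      have hr := hrec h (by omega) (by omega)
      rw [Finset.sum_Ico_succ_top (by omega : j + 1 ≤ h), show h + 1 - 1 = h by omega]
      linear_combination ih' + hr
  have hnonneg : ∀ k, 1 ≤ k → k ≤ e → ((a k).toNat : ℤ) = a k := fun k h1 h2 =>
    Int.toNat_of_nonneg (le_trans (by positivity) (part1 k h1 h2))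
  have part2 : ∀ j h : ℕ, 1 ≤ j → j + 2 ≤ h → h ≤ e →
      MvPolynomial.aeval (fun k : ℕ => (PowerSeries.X : PowerSeries K) ^ (a k).toNat)
        (E K c j h) = 0 := by
    intro j h hj1 hjh hhe
    have hexp : (a j).toNat + (a h).toNat =
        (a (j + 1)).toNat + (∑ n ∈ Finset.Ico (j + 1) h, (a n).toNat * (c n - 2)) +
          (a (h - 1)).toNat := by
      have H := ident j hj1 h hjh hhe
      have e1 := hnonneg j hj1 (by omega)
      have e2 := hnonneg h (by omega) hhe
      have e3 := hnonneg (j + 1) (by omega) (by omega)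
      have e4 := hnonneg (h - 1) (by omega) (by omega)
      have e5 : ((∑ n ∈ Finset.Ico (j + 1) h, (a n).toNat * (c n - 2) : ℕ) : ℤ)
          = ∑ n ∈ Finset.Ico (j + 1) h, ((c n : ℤ) - 2) * a n := by
        rw [Nat.cast_sum]
        refine Finset.sum_congr rfl fun n hn => ?_
        simp only [Finset.mem_Ico] at hn
        have h2 : 2 ≤ c n := hc n (by omega) (by omega)
        rw [Nat.cast_mul, hnonneg n (by omega) (by omega), Nat.cast_sub h2]
        push_cast
        ring
      have key : (((a j).toNat + (a h).toNat : ℕ) : ℤ)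
          = (((a (j + 1)).toNat + (∑ n ∈ Finset.Ico (j + 1) h, (a n).toNat * (c n - 2)) +
              (a (h - 1)).toNat : ℕ) : ℤ) := by
        rw [Nat.cast_add, Nat.cast_add, Nat.cast_add, e1, e2, e3, e4, e5, H]
        ring
      exact_mod_cast key
    have heval : MvPolynomial.aeval (fun k : ℕ => (PowerSeries.X : PowerSeries K) ^ (a k).toNat)
        (E K c j h)
        = (PowerSeries.X : PowerSeries K) ^ ((a j).toNat + (a h).toNat)
          - (PowerSeries.X : PowerSeries K) ^
            ((a (j + 1)).toNat + (∑ n ∈ Finset.Ico (j + 1) h, (a n).toNat * (c n - 2)) +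
              (a (h - 1)).toNat) := by
      simp only [E, map_sub, map_mul, map_prod, map_pow, aeval_X]
      simp_rw [← pow_mul]
      rw [Finset.prod_pow_eq_pow_sum, ← pow_add, ← pow_add, ← pow_add]
    rw [heval, hexp, sub_self]
  refine ⟨part1, part2, ?_, ?_⟩
  · rw [hai, Int.toNat_natCast, PowerSeries.order_X_pow]
  · rw [hai1, Int.toNat_natCast, PowerSeries.order_X_pow]
end

section
/- Suppose c_i = 2 for all i = 2,…,e−1. Then for every m ≥ 1, the number N(m) of equivalence classes of T(m) under ~ equals ⌈m/2⌉ (the least integer ≥ m/2). -/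
/-- `m_i^s := min((c_i - 1)s, (m+1) - s)`. -/
def mIS (c : ℤ → ℤ) (m s i : ℤ) : ℤ := min ((c i - 1) * s) ((m + 1) - s)

/-- The index set `T(m) = {(i,s,l) : 2 ≤ i ≤ e-1, 1 ≤ s, 2s-1 ≤ m, s ≤ l ≤ m_i^s}` of the
irreducible components of the fiber over the singular point of the `m`-th jet scheme
(Theorem 4.11). -/
def Tset (c : ℤ → ℤ) (e m : ℤ) : Set (ℤ × ℤ × ℤ) :=
  {x | 2 ≤ x.1 ∧ x.1 ≤ e - 1 ∧ 1 ≤ x.2.1 ∧ 2 * x.2.1 - 1 ≤ m ∧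
    x.2.1 ≤ x.2.2 ∧ x.2.2 ≤ mIS c m x.2.1 x.1}

/-- The generating relation of the identifications `(i,s,s) ~ (i+1, s, m_{i+1}^s)`
for `2 ≤ i ≤ e-2`. -/
def genRel (c : ℤ → ℤ) (e m : ℤ) (a b : Tset c e m) : Prop :=
  ∃ i s : ℤ, 2 ≤ i ∧ i ≤ e - 2 ∧ (a : ℤ × ℤ × ℤ) = (i, s, s) ∧
    (b : ℤ × ℤ × ℤ) = (i + 1, s, mIS c m s (i + 1))

/-- `N(m)`: the number of equivalence classes of `T(m)` under the equivalence relation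
generated by `genRel`, i.e. the number of irreducible components of the fiber over the
singular point of the `m`-th jet scheme. -/
noncomputable def Ncount (c : ℤ → ℤ) (e m : ℤ) : ℕ := Nat.card (Quot (genRel c e m))

/-- Corollary 4.14, first case: if all `c_i = 2` then `N(m) = ⌈m/2⌉`. -/
theorem Ncount_of_all_two (e : ℤ) (he : 4 ≤ e) (c : ℤ → ℤ)
    (hc : ∀ i, 2 ≤ i → i ≤ e - 1 → c i = 2) :
    ∀ m : ℤ, 1 ≤ m → (Ncount c e m : ℤ) = ⌈(m : ℚ) / 2⌉ := by
  intro m hm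
  set k : ℤ := (m + 1) / 2 with hk
  have hk1 : 1 ≤ k := by omega
  have hk2 : 2 * k ≤ m + 1 ∧ m ≤ 2 * k := by omega
  -- membership of diagonal elements
  have hmem : ∀ i s : ℤ, 2 ≤ i → i ≤ e - 1 → 1 ≤ s → 2 * s - 1 ≤ m →
      ((i, s, s) : ℤ × ℤ × ℤ) ∈ Tset c e m := by
    intro i s hi hi' hs hsm
    have hci := hc i hi hi'
    simp only [Tset, mIS, Set.mem_setOf_eq, hci]
    refine ⟨hi, hi', hs, hsm, le_rfl, ?_⟩
    simp only [le_min_iff]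
    omega
  -- every element of Tset is diagonal
  have hshape : ∀ x : Tset c e m, (x : ℤ × ℤ × ℤ) =
      ((x : ℤ × ℤ × ℤ).1, (x : ℤ × ℤ × ℤ).2.1, (x : ℤ × ℤ × ℤ).2.1) := by
    intro ⟨x, hx⟩
    obtain ⟨h1, h2, h3, h4, h5, h6⟩ := id hx
    have hci := hc x.1 h1 h2
    simp only [mIS, hci, le_min_iff] at h6
    have : x.2.2 = x.2.1 := by omega
    simp [Prod.ext_iff, this]
  -- chain lemma: (2,s,s) is related to (i,s,s)
  have hchain : ∀ i : ℤ, 2 ≤ i → i ≤ e - 1 →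
      ∀ (s : ℤ) (hx : ((i, s, s) : ℤ × ℤ × ℤ) ∈ Tset c e m)
        (h2 : ((2, s, s) : ℤ × ℤ × ℤ) ∈ Tset c e m),
      Quot.mk (genRel c e m) ⟨(2, s, s), h2⟩ = Quot.mk _ ⟨(i, s, s), hx⟩ := by
    refine fun i hi => Int.le_induction
      (motive := fun j _ => j ≤ e - 1 →
        ∀ (s : ℤ) (hx : ((j, s, s) : ℤ × ℤ × ℤ) ∈ Tset c e m)
          (h2 : ((2, s, s) : ℤ × ℤ × ℤ) ∈ Tset c e m),
          Quot.mk (genRel c e m) ⟨(2, s, s), h2⟩ = Quot.mk (genRel c e m) ⟨(j, s, s), hx⟩)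
      ?_ ?_ i hi
    · intro _ s hx h2; rfl
    · intro i hi IH hle s hx h2
      have hie : i ≤ e - 1 := by omega
      obtain ⟨_, _, hs1, hs2, _, _⟩ := id hx
      have hxi : ((i, s, s) : ℤ × ℤ × ℤ) ∈ Tset c e m := hmem i s hi hie hs1 (by simpa using hs2)
      have hmis : mIS c m s (i + 1) = s := by
        have := hc (i + 1) (by omega) (by omega)
        simp only [mIS, this]
        simp only at hs2
        omega
      have hstep : Quot.mk (genRel c e m) ⟨(i, s, s), hxi⟩ = Quot.mk _ ⟨(i + 1, s, s), hx⟩ := by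
        apply Quot.sound
        exact ⟨i, s, hi, by omega, rfl, by rw [hmis]⟩
      rw [IH hie s hxi h2, hstep]
  -- the bijection with Finset.Icc 1 k
  have hbound : ∀ x : Tset c e m, (x : ℤ × ℤ × ℤ).2.1 ∈ Finset.Icc 1 k := by
    intro ⟨x, hx⟩
    obtain ⟨_, _, h3, h4, _, _⟩ := id hx
    simp only [Finset.mem_Icc]
    omega
  have hwd : ∀ a b : Tset c e m, genRel c e m a b →
      (⟨(a : ℤ × ℤ × ℤ).2.1, hbound a⟩ : (Finset.Icc 1 k : Finset ℤ)) =
      ⟨(b : ℤ × ℤ × ℤ).2.1, hbound b⟩ := by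
    rintro a b ⟨i, s, _, _, ha, hb⟩
    ext
    simp [ha, hb]
  let F : Quot (genRel c e m) ≃ (Finset.Icc 1 k : Finset ℤ) :=
    { toFun := Quot.lift (fun x => ⟨(x : ℤ × ℤ × ℤ).2.1, hbound x⟩) hwd
      invFun := fun s => Quot.mk _ ⟨(2, s.1, s.1),
        hmem 2 s.1 le_rfl (by omega) (by have := s.2; simp only [Finset.mem_Icc] at this; omega)
          (by have := s.2; simp only [Finset.mem_Icc] at this; omega)⟩
      left_inv := by
        apply Quot.ind
        intro x
        have hx := hshape x
        have hxmem : ((x : ℤ × ℤ × ℤ).1, (x : ℤ × ℤ × ℤ).2.1, (x : ℤ × ℤ × ℤ).2.1)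
            ∈ Tset c e m := hx ▸ x.2
        have hxeq : x = ⟨((x : ℤ × ℤ × ℤ).1, (x : ℤ × ℤ × ℤ).2.1, (x : ℤ × ℤ × ℤ).2.1),
            hxmem⟩ := Subtype.ext hx
        obtain ⟨h1, h2, _, _, _, _⟩ := x.2
        simp only
        rw [hxeq]
        exact hchain _ h1 h2 _ _ _
      right_inv := fun s => rfl }
  have hcard : Ncount c e m = (Finset.Icc 1 k).card := by
    rw [Ncount, Nat.card_congr F, Nat.card_eq_finsetCard]
  rw [hcard, Int.card_Icc]
  have : ⌈(m : ℚ) / 2⌉ = k := by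
    rw [Int.ceil_eq_iff]
    constructor
    · rw [lt_div_iff₀ (by norm_num : (0:ℚ) < 2)]
      have : (2 : ℚ) * k - 2 < m := by exact_mod_cast (by omega : 2 * k - 2 < m)
      linarith
    · rw [div_le_iff₀ (by norm_num : (0:ℚ) < 2)]
      exact_mod_cast (by omega : m ≤ k * 2)
  rw [this]
  omega
end

section
/- Let e ≥ 4 and let c = (c_2,…,c_{e−1}) and c' = (c'_2,…,c'_{e−1}) be two tuples of integers with all entries ≥ 2. If N_c(m) = N_{c'}(m) for every m ≥ 1, then the multiset {c_2,…,c_{e−1}} equals the multiset {c'_2,…,c'_{e−1}}. (In other words, the numbers of irreducible components of the jet schemes over the singular point determine the set of entries of the continued fraction expansion, though not their order.) -/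
noncomputable def Gfin (c : ℤ → ℤ) (e n : ℤ) : Finset (ℤ × ℤ × ℤ) :=
  ((Finset.Icc 2 (e-1)) ×ˢ (Finset.Icc 1 n ×ˢ Finset.Icc 1 n)).filter
    (fun x => x.2.1 ≤ x.2.2 ∧ x.2.2 ≤ (c x.1 - 1) * x.2.1 ∧ x.2.1 + x.2.2 ≤ n)

lemma mem_Gfin {c : ℤ → ℤ} {e n : ℤ} {x : ℤ × ℤ × ℤ} :
    x ∈ Gfin c e n ↔ 2 ≤ x.1 ∧ x.1 ≤ e - 1 ∧ 1 ≤ x.2.1 ∧ x.2.1 ≤ x.2.2 ∧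
      x.2.2 ≤ (c x.1 - 1) * x.2.1 ∧ x.2.1 + x.2.2 ≤ n := by
  obtain ⟨i, s, l⟩ := x
  simp only [Gfin, Finset.mem_filter, Finset.mem_product, Finset.mem_Icc]
  constructor
  · rintro ⟨⟨h1, h2, h3⟩, h4, h5, h6⟩
    exact ⟨h1.1, h1.2, h2.1, h4, h5, h6⟩
  · rintro ⟨h1, h2, h3, h4, h5, h6⟩
    exact ⟨⟨⟨h1, h2⟩, ⟨h3, by omega⟩, ⟨by omega, by omega⟩⟩, h4, h5, h6⟩

lemma mem_Gfin' {c : ℤ → ℤ} {e n i s l : ℤ} :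
    (i, s, l) ∈ Gfin c e n ↔ 2 ≤ i ∧ i ≤ e - 1 ∧ 1 ≤ s ∧ s ≤ l ∧
      l ≤ (c i - 1) * s ∧ s + l ≤ n := mem_Gfin

lemma Tset_eq_Gfin (c : ℤ → ℤ) (e m : ℤ) :
    Tset c e m = ↑(Gfin c e (m+1)) := by
  ext ⟨i, s, l⟩
  simp only [Tset, Set.mem_setOf_eq, mIS, le_min_iff, Finset.mem_coe, mem_Gfin]
  constructor
  · rintro ⟨h1, h2, h3, h4, h5, h6, h7⟩
    exact ⟨h1, h2, h3, h5, h6, by omega⟩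
  · rintro ⟨h1, h2, h3, h4, h5, h6⟩
    exact ⟨h1, h2, h3, by omega, h4, h5, by omega⟩

def rho0 (c : ℤ → ℤ) (m : ℤ) : ℕ → ℤ × ℤ × ℤ → ℤ × ℤ × ℤ
  | 0, x => x
  | n+1, x => if x.2.2 = x.2.1 then rho0 c m n (x.1 + 1, x.2.1, mIS c m x.2.1 (x.1 + 1)) else x

def rho (c : ℤ → ℤ) (e m : ℤ) (x : ℤ × ℤ × ℤ) : ℤ × ℤ × ℤ :=
  rho0 c m (e - 1 - x.1).toNat x

section rho
variable {c : ℤ → ℤ} {e m : ℤ}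

lemma rho0_ne (n : ℕ) {x : ℤ × ℤ × ℤ} (h : x.2.2 ≠ x.2.1) : rho0 c m n x = x := by
  cases n with
  | zero => rfl
  | succ n => simp [rho0, h]

lemma step_mem (hc : ∀ i, 2 ≤ i → i ≤ e - 1 → 2 ≤ c i)
    {i s l : ℤ} (hx : (i, s, l) ∈ Tset c e m) (hi : i ≤ e - 2) :
    (i + 1, s, mIS c m s (i + 1)) ∈ Tset c e m := by
  obtain ⟨h1, h2, h3, h4, h5, h6⟩ :
      2 ≤ i ∧ i ≤ e - 1 ∧ 1 ≤ s ∧ 2 * s - 1 ≤ m ∧ s ≤ l ∧ l ≤ mIS c m s i := hx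
  have hci : 2 ≤ c (i + 1) := hc _ (by omega) (by omega)
  show 2 ≤ i + 1 ∧ i + 1 ≤ e - 1 ∧ 1 ≤ s ∧ 2 * s - 1 ≤ m ∧ s ≤ mIS c m s (i+1) ∧
      mIS c m s (i+1) ≤ mIS c m s (i+1)
  refine ⟨by omega, by omega, h3, h4, le_min ?_ (by omega), le_refl _⟩
  nlinarith

lemma rho0_mem_fix (hc : ∀ i, 2 ≤ i → i ≤ e - 1 → 2 ≤ c i) :
    ∀ (n : ℕ) (x : ℤ × ℤ × ℤ), x ∈ Tset c e m → (e - 1 - x.1).toNat = n →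
      rho0 c m n x ∈ Tset c e m ∧
        ((rho0 c m n x).2.2 ≠ (rho0 c m n x).2.1 ∨ (rho0 c m n x).1 = e - 1) := by
  intro n
  induction n with
  | zero =>
    rintro ⟨i, s, l⟩ hx hn
    have h2 : i ≤ e - 1 := hx.2.1
    have hn' : (e - 1 - i).toNat = 0 := hn
    exact ⟨hx, Or.inr (show i = e - 1 by omega)⟩
  | succ n ih =>
    rintro ⟨i, s, l⟩ hx hn
    have hn' : (e - 1 - i).toNat = n + 1 := hn
    by_cases hl : l = s
    · subst hl
      have hi : i ≤ e - 2 := by omega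
      have hx' := step_mem hc hx hi
      have := ih _ hx' (show (e - 1 - (i+1)).toNat = n by omega)
      have hstep : rho0 c m (n+1) (i, l, l) = rho0 c m n (i + 1, l, mIS c m l (i + 1)) := by
        simp [rho0]
      rw [hstep]
      exact this
    · have hne : ((i,s,l) : ℤ×ℤ×ℤ).2.2 ≠ ((i,s,l) : ℤ×ℤ×ℤ).2.1 := hl
      rw [rho0_ne _ hne]
      exact ⟨hx, Or.inl hne⟩

lemma rho0_quot (hc : ∀ i, 2 ≤ i → i ≤ e - 1 → 2 ≤ c i) :
    ∀ (n : ℕ) (x : ℤ × ℤ × ℤ) (hx : x ∈ Tset c e m), (e - 1 - x.1).toNat = n →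
      ∀ (h2 : rho0 c m n x ∈ Tset c e m),
        Quot.mk (genRel c e m) ⟨rho0 c m n x, h2⟩ = Quot.mk (genRel c e m) ⟨x, hx⟩ := by
  intro n
  induction n with
  | zero => intro x hx hn h2; rfl
  | succ n ih =>
    rintro ⟨i, s, l⟩ hx hn h2
    have hn' : (e - 1 - i).toNat = n + 1 := hn
    by_cases hl : l = s
    · subst hl
      have hi : i ≤ e - 2 := by omega
      have hx' := step_mem hc hx hi
      have hstep : rho0 c m (n+1) (i, l, l) = rho0 c m n (i + 1, l, mIS c m l (i + 1)) := by
        simp [rho0]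
      have h2' : rho0 c m n (i + 1, l, mIS c m l (i + 1)) ∈ Tset c e m := hstep ▸ h2
      have hsub : (⟨rho0 c m (n+1) (i, l, l), h2⟩ : Tset c e m)
          = ⟨rho0 c m n (i + 1, l, mIS c m l (i + 1)), h2'⟩ := Subtype.ext hstep
      rw [hsub, ih _ hx' (show (e - 1 - (i+1)).toNat = n by omega) h2']
      exact (Quot.sound ⟨i, l, hx.1, hi, rfl, rfl⟩).symm
    · have hne : ((i,s,l) : ℤ×ℤ×ℤ).2.2 ≠ ((i,s,l) : ℤ×ℤ×ℤ).2.1 := hl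
      congr 1
      exact Subtype.ext (rho0_ne _ hne)

lemma rho_fix_id {x : ℤ × ℤ × ℤ} (hT : x.1 ≤ e - 1)
    (hfix : x.2.2 ≠ x.2.1 ∨ x.1 = e - 1) : rho c e m x = x := by
  rcases hfix with h | h
  · exact rho0_ne _ h
  · unfold rho
    rw [show (e - 1 - x.1).toNat = 0 by omega]
    rfl

lemma rho_resp {a b : Tset c e m} (hab : genRel c e m a b) :
    rho c e m a.1 = rho c e m b.1 := by
  obtain ⟨i, s, h2i, hie, ha, hb⟩ := hab
  rw [ha, hb]
  unfold rho
  have h1 : ((i, s, s) : ℤ×ℤ×ℤ).1 = i := rfl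
  have h2 : ((i+1, s, mIS c m s (i+1)) : ℤ×ℤ×ℤ).1 = i + 1 := rfl
  rw [h1, h2, show (e - 1 - i).toNat = (e - 1 - (i+1)).toNat + 1 by omega]
  simp [rho0]

end rho

noncomputable def Efin (e m : ℤ) : Finset (ℤ × ℤ) :=
  (Finset.Icc 2 (e-2)) ×ˢ ((Finset.Icc 1 m).filter (fun s => 2*s - 1 ≤ m))

lemma Ncount_add (e : ℤ) (he : 4 ≤ e) (c : ℤ → ℤ)
    (hc : ∀ i, 2 ≤ i → i ≤ e - 1 → 2 ≤ c i) (m : ℤ) (hm : 1 ≤ m) :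
    Ncount c e m + (Efin e m).card = (Gfin c e (m+1)).card := by
  classical
  have memTG : ∀ x : ℤ × ℤ × ℤ, x ∈ Tset c e m ↔ x ∈ Gfin c e (m+1) := by
    intro x
    rw [Tset_eq_Gfin, Finset.mem_coe]
  set Fixfin := (Gfin c e (m+1)).filter (fun x => x.2.2 ≠ x.2.1 ∨ x.1 = e - 1) with hFixfin
  have hbound : ∀ a : Tset c e m, rho c e m a.1 ∈ Fixfin := by
    intro a
    have h := rho0_mem_fix hc _ a.1 a.2 rfl
    exact Finset.mem_filter.mpr ⟨(memTG _).1 h.1, h.2⟩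
  have hcard : Ncount c e m = Fixfin.card := by
    have equiv : Quot (genRel c e m) ≃ {x // x ∈ Fixfin} := by
      refine
        { toFun := Quot.lift (fun a => ⟨rho c e m a.1, hbound a⟩)
            (fun a b hab => Subtype.ext (rho_resp hab)),
          invFun := fun y => Quot.mk _ ⟨y.1, (memTG _).2 (Finset.mem_filter.mp y.2).1⟩,
          left_inv := ?_, right_inv := ?_ }
      · intro q
        induction q using Quot.ind with
        | _ a =>
          exact rho0_quot hc _ a.1 a.2 rfl
            ((memTG _).2 (Finset.mem_filter.mp (hbound a)).1)
      · intro y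
        exact Subtype.ext (rho_fix_id
          (mem_Gfin.mp (Finset.mem_filter.mp y.2).1).2.1
          (Finset.mem_filter.mp y.2).2)
    unfold Ncount
    rw [Nat.card_congr equiv]
    simp [Nat.card_eq_fintype_card, Fintype.card_coe]
  have hneg : ((Gfin c e (m+1)).filter (fun x => ¬(x.2.2 ≠ x.2.1 ∨ x.1 = e - 1))).card
      = (Efin e m).card := by
    refine Finset.card_bij' (fun x _ => (x.1, x.2.1)) (fun p _ => (p.1, p.2, p.2))
      ?hi ?hj ?left ?right
    case hi =>
      rintro ⟨i, s, l⟩ hx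
      rw [Finset.mem_filter] at hx
      obtain ⟨hg, hnf⟩ := hx
      push_neg at hnf
      obtain ⟨h1, h2, h3, h4, h5, h6⟩ := mem_Gfin'.mp hg
      have hls : l = s := hnf.1
      have hie : i ≠ e - 1 := hnf.2
      simp only [Efin, Finset.mem_product, Finset.mem_Icc, Finset.mem_filter]
      exact ⟨⟨h1, by omega⟩, ⟨h3, by omega⟩, by omega⟩
    case hj =>
      rintro ⟨i, s⟩ hp
      dsimp only
      simp only [Efin, Finset.mem_product, Finset.mem_Icc, Finset.mem_filter] at hp
      obtain ⟨⟨h1, h2⟩, ⟨h3, h4⟩, h5⟩ := hp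
      rw [Finset.mem_filter]
      have hci : 2 ≤ c i := hc i h1 (by omega)
      constructor
      · rw [show ((i, s).1, (i, s).2, (i, s).2) = (i, s, s) from rfl, mem_Gfin']
        refine ⟨h1, by omega, h3, le_refl _, ?_, by omega⟩
        nlinarith
      · push_neg
        exact ⟨rfl, by omega⟩
    case left =>
      rintro ⟨i, s, l⟩ hx
      rw [Finset.mem_filter] at hx
      have hls : l = s := by
        have h := hx.2
        push_neg at h
        exact h.1
      simp [hls]
    case right =>
      rintro ⟨i, s⟩ hp
      rfl
  have hpart := Finset.card_filter_add_card_filter_not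
    (s := Gfin c e (m+1)) (p := fun x => x.2.2 ≠ x.2.1 ∨ x.1 = e - 1)
  rw [hFixfin] at hcard
  omega

/-! ### Section 4: slicing `Gfin` -/

noncomputable def Bfin (c : ℤ → ℤ) (e n : ℤ) : Finset (ℤ × ℤ) :=
  ((Finset.Icc 2 (e-1)) ×ˢ (Finset.Icc 1 n)).filter
    (fun p => 2 * p.2 ≤ n ∧ n ≤ c p.1 * p.2)

lemma mem_Bfin' {c : ℤ → ℤ} {e n i s : ℤ} :
    (i, s) ∈ Bfin c e n ↔ 2 ≤ i ∧ i ≤ e - 1 ∧ 1 ≤ s ∧ 2*s ≤ n ∧ n ≤ c i * s := by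
  simp only [Bfin, Finset.mem_filter, Finset.mem_product, Finset.mem_Icc]
  constructor
  · rintro ⟨⟨⟨h1, h2⟩, h3, h4⟩, h5, h6⟩
    exact ⟨h1, h2, h3, h5, h6⟩
  · rintro ⟨h1, h2, h3, h4, h5⟩
    exact ⟨⟨⟨h1, h2⟩, h3, by omega⟩, h4, h5⟩

lemma Gfin_empty (c : ℤ → ℤ) (e n : ℤ) (hn : n ≤ 1) : Gfin c e n = ∅ := by
  rw [Finset.eq_empty_iff_forall_notMem]
  rintro ⟨i, s, l⟩ hx
  obtain ⟨h1, h2, h3, h4, h5, h6⟩ := mem_Gfin'.mp hx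
  omega

lemma Gcard_rec (c : ℤ → ℤ) (e n : ℤ) :
    (Gfin c e n).card = (Gfin c e (n-1)).card + (Bfin c e n).card := by
  classical
  have hsplit := Finset.card_filter_add_card_filter_not
    (s := Gfin c e n) (p := fun x => x.2.1 + x.2.2 ≤ n - 1)
  have h1 : (Gfin c e n).filter (fun x => x.2.1 + x.2.2 ≤ n - 1) = Gfin c e (n-1) := by
    ext ⟨i, s, l⟩
    simp only [Finset.mem_filter, mem_Gfin']
    constructor
    · rintro ⟨⟨a1, a2, a3, a4, a5, a6⟩, a7⟩
      exact ⟨a1, a2, a3, a4, a5, a7⟩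
    · rintro ⟨a1, a2, a3, a4, a5, a6⟩
      exact ⟨⟨a1, a2, a3, a4, a5, by omega⟩, a6⟩
  have h2 : ((Gfin c e n).filter (fun x => ¬(x.2.1 + x.2.2 ≤ n - 1))).card
      = (Bfin c e n).card := by
    refine Finset.card_bij' (fun x _ => (x.1, x.2.1)) (fun p _ => (p.1, p.2, n - p.2))
      ?hi ?hj ?left ?right
    case hi =>
      rintro ⟨i, s, l⟩ hx
      rw [Finset.mem_filter] at hx
      obtain ⟨hg, hng⟩ := hx
      obtain ⟨a1, a2, a3, a4, a5, a6⟩ := mem_Gfin'.mp hg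
      have hr : (c i - 1) * s = c i * s - s := by ring
      have hng' : ¬ (s + l ≤ n - 1) := hng
      show (i, s) ∈ Bfin c e n
      rw [mem_Bfin']
      omega
    case hj =>
      rintro ⟨i, s⟩ hp
      obtain ⟨a1, a2, a3, a4, a5⟩ := mem_Bfin'.mp hp
      have hr : (c i - 1) * s = c i * s - s := by ring
      show ((i, s, n - s) : ℤ × ℤ × ℤ) ∈ Finset.filter _ _
      simp only [Finset.mem_filter, mem_Gfin']
      omega
    case left =>
      rintro ⟨i, s, l⟩ hx
      rw [Finset.mem_filter] at hx
      obtain ⟨hg, hng⟩ := hx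
      obtain ⟨a1, a2, a3, a4, a5, a6⟩ := mem_Gfin'.mp hg
      have hng' : ¬ (s + l ≤ n - 1) := hng
      have : l = n - s := by omega
      simp [this]
    case right =>
      rintro ⟨i, s⟩ hp
      rfl
  rw [h1] at hsplit
  omega

/-! ### Section 5: the difference of consecutive `Bfin` cards gives divisor counts -/

noncomputable def Dfin (c : ℤ → ℤ) (e n : ℤ) : Finset ℤ :=
  (Finset.Icc 2 (e-1)).filter (fun i => c i ∣ n)

lemma Bstep (e : ℤ) (c : ℤ → ℤ) (hc : ∀ i, 2 ≤ i → i ≤ e - 1 → 2 ≤ c i)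
    (n : ℤ) (hn : 1 ≤ n) :
    (Bfin c e (n+1)).card + (Dfin c e n).card
      = (Bfin c e n).card + (if (2:ℤ) ∣ (n+1) then (Finset.Icc 2 (e-1)).card else 0) := by
  classical
  have hA : (Bfin c e (n+1) \ Bfin c e n).card
      = (if (2:ℤ) ∣ (n+1) then (Finset.Icc 2 (e-1)).card else 0) := by
    by_cases h2 : (2:ℤ) ∣ (n+1)
    · rw [if_pos h2]
      obtain ⟨k, hk⟩ := h2
      have heq : Bfin c e (n+1) \ Bfin c e n = (Finset.Icc 2 (e-1)) ×ˢ {k} := by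
        ext ⟨i, s⟩
        simp only [Finset.mem_sdiff, mem_Bfin', Finset.mem_product, Finset.mem_Icc,
          Finset.mem_singleton]
        constructor
        · rintro ⟨⟨a1, a2, a3, a4, a5⟩, hna⟩
          refine ⟨⟨a1, a2⟩, ?_⟩
          omega
        · rintro ⟨⟨a1, a2⟩, rfl⟩
          have hci : 2 ≤ c i := hc i a1 a2
          have h1s : 1 ≤ s := by omega
          have hks : n + 1 ≤ c i * s := by nlinarith
          exact ⟨⟨a1, a2, by omega, by omega, hks⟩, by omega⟩
      rw [heq, Finset.card_product, Finset.card_singleton, mul_one]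
    · rw [if_neg h2]
      rw [Finset.card_eq_zero, Finset.eq_empty_iff_forall_notMem]
      rintro ⟨i, s⟩ hx
      rw [Finset.mem_sdiff, mem_Bfin', mem_Bfin'] at hx
      omega
  have hB : (Bfin c e n \ Bfin c e (n+1)).card = (Dfin c e n).card := by
    refine Finset.card_bij' (fun p _ => p.1) (fun i _ => (i, n / c i)) ?hi ?hj ?left ?right
    case hi =>
      rintro ⟨i, s⟩ hp
      rw [Finset.mem_sdiff, mem_Bfin', mem_Bfin'] at hp
      obtain ⟨⟨a1, a2, a3, a4, a5⟩, hna⟩ := hp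
      have hcs : c i * s = n := by omega
      exact Finset.mem_filter.mpr ⟨Finset.mem_Icc.mpr ⟨a1, a2⟩, ⟨s, hcs.symm⟩⟩
    case hj =>
      intro i hi
      rw [Dfin, Finset.mem_filter, Finset.mem_Icc] at hi
      obtain ⟨⟨h1, h2⟩, hdvd⟩ := hi
      have hci : 2 ≤ c i := hc i h1 h2
      set q := n / c i with hq
      have hcs : c i * q = n := Int.mul_ediv_cancel' hdvd
      have hnc : c i ≤ n := Int.le_of_dvd (by omega) hdvd
      have hs1 : 1 ≤ q := by
        rcases le_or_gt 1 q with h | h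
        · exact h
        · exfalso
          have hq0 : q ≤ 0 := by omega
          have : c i * q ≤ 0 := mul_nonpos_of_nonneg_of_nonpos (by omega) hq0
          omega
      have hexp : (c i - 2) * q = c i * q - 2 * q := by ring
      have hprod : 0 ≤ (c i - 2) * q := mul_nonneg (by omega) (by omega)
      show ((i, q) : ℤ × ℤ) ∈ _ \ _
      rw [Finset.mem_sdiff, mem_Bfin', mem_Bfin']
      omega
    case left =>
      rintro ⟨i, s⟩ hp
      rw [Finset.mem_sdiff, mem_Bfin', mem_Bfin'] at hp
      obtain ⟨⟨a1, a2, a3, a4, a5⟩, hna⟩ := hp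
      have hci : 2 ≤ c i := hc i a1 a2
      have hcs : c i * s = n := by omega
      have : n / c i = s := by
        rw [← hcs, Int.mul_ediv_cancel_left _ (by omega : c i ≠ 0)]
      simp [this]
    case right =>
      intro i hi
      rfl
  have key1 := Finset.card_inter_add_card_sdiff (Bfin c e (n+1)) (Bfin c e n)
  have key2 := Finset.card_inter_add_card_sdiff (Bfin c e n) (Bfin c e (n+1))
  rw [Finset.inter_comm] at key2
  omega

/-! ### Section 6: extraction of the multiset -/

lemma Dfin_eq_count (e : ℤ) (he : 4 ≤ e) (c : ℤ → ℤ)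
    (hc : ∀ i, 2 ≤ i → i ≤ e - 1 → 2 ≤ c i) (k : ℤ) (hk : 2 ≤ k) :
    (Dfin c e k).card = ((Finset.Icc 2 (e-1)).filter (fun i => c i = k)).card
      + ∑ b ∈ Finset.Icc 2 (k-1),
          (if b ∣ k then ((Finset.Icc 2 (e-1)).filter (fun i => c i = b)).card else 0) := by
  classical
  have hsplit := Finset.card_filter_add_card_filter_not
    (s := Dfin c e k) (p := fun i => c i = k)
  have h1 : (Dfin c e k).filter (fun i => c i = k)
      = (Finset.Icc 2 (e-1)).filter (fun i => c i = k) := by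
    ext i
    simp only [Dfin, Finset.mem_filter]
    constructor
    · rintro ⟨⟨hI, _⟩, hik⟩
      exact ⟨hI, hik⟩
    · rintro ⟨hI, hik⟩
      exact ⟨⟨hI, hik ▸ dvd_refl k⟩, hik⟩
  have h2 : ((Dfin c e k).filter (fun i => ¬ c i = k)).card
      = ∑ b ∈ Finset.Icc 2 (k-1),
          (if b ∣ k then ((Finset.Icc 2 (e-1)).filter (fun i => c i = b)).card else 0) := by
    rw [Finset.card_eq_sum_card_fiberwise (f := c) (t := Finset.Icc 2 (k-1)) ?hmem]
    case hmem =>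
      intro i hi
      simp only [Dfin, Finset.mem_coe, Finset.mem_filter, Finset.mem_Icc] at hi
      obtain ⟨⟨⟨h1', h2'⟩, hdvd⟩, hne⟩ := hi
      have := hc i h1' h2'
      have hle : c i ≤ k := Int.le_of_dvd (by omega) hdvd
      rw [Finset.mem_coe, Finset.mem_Icc]
      omega
    refine Finset.sum_congr rfl (fun b hb => ?_)
    rw [Finset.mem_Icc] at hb
    by_cases hbk : b ∣ k
    · rw [if_pos hbk]
      congr 1
      ext i
      simp only [Dfin, Finset.mem_filter]
      constructor
      · rintro ⟨⟨⟨hI, _⟩, _⟩, hib⟩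
        exact ⟨hI, hib⟩
      · rintro ⟨hI, hib⟩
        exact ⟨⟨⟨hI, hib ▸ hbk⟩, by omega⟩, hib⟩
    · rw [if_neg hbk]
      rw [Finset.card_eq_zero, Finset.eq_empty_iff_forall_notMem]
      intro i hi
      simp only [Dfin, Finset.mem_filter] at hi
      exact hbk (hi.2 ▸ hi.1.1.2)
  rw [h1] at hsplit
  omega


/-- Corollary 4.15: the numbers of irreducible components `N(m)` for all `m ≥ 1`
determine the multiset `{c_2, …, c_{e-1}}`. -/
theorem multiset_eq_of_Ncount_eq (e : ℤ) (he : 4 ≤ e) (c c' : ℤ → ℤ)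
    (hc : ∀ i, 2 ≤ i → i ≤ e - 1 → 2 ≤ c i)
    (hc' : ∀ i, 2 ≤ i → i ≤ e - 1 → 2 ≤ c' i)
    (hN : ∀ m : ℤ, 1 ≤ m → Ncount c e m = Ncount c' e m) :
    (Finset.Icc (2 : ℤ) (e - 1)).val.map c = (Finset.Icc (2 : ℤ) (e - 1)).val.map c' := by
  classical
  have hG : ∀ n : ℤ, (Gfin c e n).card = (Gfin c' e n).card := by
    intro n
    rcases le_or_gt n 1 with h | h
    · rw [Gfin_empty c e n h, Gfin_empty c' e n h]
    · have hm : 1 ≤ n - 1 := by omega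
      have h1 := Ncount_add e he c hc (n-1) hm
      have h2 := Ncount_add e he c' hc' (n-1) hm
      have h3 := hN (n-1) hm
      rw [show n - 1 + 1 = n by ring] at h1 h2
      omega
  have hBc : ∀ n : ℤ, (Bfin c e n).card = (Bfin c' e n).card := by
    intro n
    have h1 := Gcard_rec c e n
    have h2 := Gcard_rec c' e n
    have h3 := hG n
    have h4 := hG (n-1)
    omega
  have hD : ∀ n : ℤ, 1 ≤ n → (Dfin c e n).card = (Dfin c' e n).card := by
    intro n hn
    have h1 := Bstep e c hc n hn
    have h2 := Bstep e c' hc' n hn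
    have h3 := hBc n
    have h4 := hBc (n+1)
    by_cases hpar : (2:ℤ) ∣ (n+1)
    · rw [if_pos hpar] at h1 h2; omega
    · rw [if_neg hpar] at h1 h2; omega
  have hcount : ∀ N : ℕ, ∀ k : ℤ, 2 ≤ k → k ≤ (N:ℤ) →
      ((Finset.Icc 2 (e-1)).filter (fun i => c i = k)).card
        = ((Finset.Icc 2 (e-1)).filter (fun i => c' i = k)).card := by
    intro N
    induction N with
    | zero => intro k hk hkN; exact absurd hkN (by omega)
    | succ N ih =>
      intro k hk hkN
      rcases le_or_gt k N with hkle | hkgt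
      · exact ih k hk hkle
      · have hD1 := Dfin_eq_count e he c hc k hk
        have hD2 := Dfin_eq_count e he c' hc' k hk
        have hDk := hD k (by omega)
        have hsum : (∑ b ∈ Finset.Icc 2 (k-1),
            (if b ∣ k then ((Finset.Icc 2 (e-1)).filter (fun i => c i = b)).card else 0))
            = ∑ b ∈ Finset.Icc 2 (k-1),
            (if b ∣ k then ((Finset.Icc 2 (e-1)).filter (fun i => c' i = b)).card else 0) := by
          refine Finset.sum_congr rfl (fun b hb => ?_)
          rw [Finset.mem_Icc] at hb
          by_cases hbk : b ∣ k
          · rw [if_pos hbk, if_pos hbk, ih b hb.1 (by omega)]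
          · rw [if_neg hbk, if_neg hbk]
        omega
  refine Multiset.ext.mpr (fun a => ?_)
  have hcm : ∀ f : ℤ → ℤ, Multiset.count a ((Finset.Icc (2:ℤ) (e-1)).val.map f)
      = ((Finset.Icc (2:ℤ) (e-1)).filter (fun i => f i = a)).card := by
    intro f
    rw [Multiset.count_map]
    have heq : (Finset.Icc (2:ℤ) (e-1)).filter (fun i => a = f i)
        = (Finset.Icc (2:ℤ) (e-1)).filter (fun i => f i = a) :=
      Finset.filter_congr (fun x _ => eq_comm)
    calc (Multiset.filter (fun i => a = f i) (Finset.Icc (2:ℤ) (e-1)).val).card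
        = ((Finset.Icc (2:ℤ) (e-1)).filter (fun i => a = f i)).card := rfl
      _ = _ := by rw [heq]
  rw [hcm c, hcm c']
  rcases lt_or_ge a 2 with ha | ha
  · rw [Finset.filter_eq_empty_iff.mpr ?_, Finset.filter_eq_empty_iff.mpr ?_]
    · intro i hi
      rw [Finset.mem_Icc] at hi
      have := hc' i hi.1 hi.2
      omega
    · intro i hi
      rw [Finset.mem_Icc] at hi
      have := hc i hi.1 hi.2
      omega
  · exact hcount a.toNat a ha (by omega)
end

section
/- Let m be an integer with m ≥ max{c_2,…,c_{e−1}}. Then the number of equivalence classes of T(m) under ~ consisting of triples (i,s,l) with s = 1 (that is, the number of irreducible components with index of speciality 1) equals c_2 + c_3 + ⋯ + c_{e−1} − 2(e−2) + 1. -/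
/-- the bottom of the chain of gluings below `i` (at index of speciality `s`). -/
noncomputable def chainBot (c : ℤ → ℤ) (m s i : ℤ) : ℤ :=
  (insert 2 ((Finset.Icc 3 i).filter (fun k => mIS c m s k ≠ s))).max'
    (Finset.insert_nonempty _ _)

/-- canonical representative map -/
noncomputable def rep' (c : ℤ → ℤ) (m : ℤ) (p : ℤ × ℤ × ℤ) : ℤ × ℤ × ℤ :=
  if p.2.2 = mIS c m p.2.1 p.1 ∧ 3 ≤ p.1 then
    (chainBot c m p.2.1 (p.1 - 1), p.2.1, p.2.1) else p

lemma chainBot_ge (c : ℤ → ℤ) (m s i : ℤ) : 2 ≤ chainBot c m s i :=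
  Finset.le_max' _ _ (Finset.mem_insert_self _ _)

lemma chainBot_le (c : ℤ → ℤ) (m s i : ℤ) (hi : 2 ≤ i) : chainBot c m s i ≤ i := by
  apply Finset.max'_le
  intro y hy
  rcases Finset.mem_insert.1 hy with h | h
  · omega
  · have := (Finset.mem_filter.1 h).1
    have := Finset.mem_Icc.1 this
    omega

lemma chainBot_of_ne (c : ℤ → ℤ) (m s i : ℤ) (hi : 3 ≤ i) (h : mIS c m s i ≠ s) :
    chainBot c m s i = i := by
  apply le_antisymm (chainBot_le c m s i (by omega))
  apply Finset.le_max'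
  exact Finset.mem_insert_of_mem (Finset.mem_filter.2 ⟨Finset.mem_Icc.2 ⟨hi, le_refl _⟩, h⟩)

lemma chainBot_of_eq (c : ℤ → ℤ) (m s i : ℤ) (hi : 3 ≤ i) (h : mIS c m s i = s) :
    chainBot c m s i = chainBot c m s (i - 1) := by
  unfold chainBot
  congr 2
  apply Finset.ext
  intro k
  simp only [Finset.mem_filter, Finset.mem_Icc]
  constructor
  · rintro ⟨⟨h1, h2⟩, h3⟩
    refine ⟨⟨h1, ?_⟩, h3⟩
    rcases eq_or_lt_of_le h2 with rfl | h4
    · exact absurd h h3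
    · omega
  · rintro ⟨⟨h1, h2⟩, h3⟩
    exact ⟨⟨h1, by omega⟩, h3⟩

lemma chainBot_two (c : ℤ → ℤ) (m s : ℤ) : chainBot c m s 2 = 2 :=
  le_antisymm (chainBot_le c m s 2 le_rfl) (chainBot_ge c m s 2)

/-- `rep'` is invariant under the generating relation. -/
lemma rep'_invariant (c : ℤ → ℤ) (e m : ℤ) (a b : Tset c e m) (h : genRel c e m a b) :
    rep' c m a.val = rep' c m b.val := by
  obtain ⟨i, s, h2i, hie, ha, hb⟩ := h
  rw [ha, hb]
  have hb' : rep' c m (i + 1, s, mIS c m s (i + 1)) = (chainBot c m s i, s, s) := by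
    unfold rep'
    rw [if_pos ⟨rfl, by omega⟩]
    simp
  rw [hb']
  unfold rep'
  by_cases hcase : s = mIS c m s i ∧ 3 ≤ i
  · rw [if_pos (by simpa using hcase)]
    obtain ⟨h1, h2⟩ := hcase
    rw [chainBot_of_eq c m s i h2 h1.symm]
  · rw [if_neg (by simpa using hcase)]
    rcases (not_and_or.1 hcase) with h1 | h2
    · have h3 : 3 ≤ i ∨ i = 2 := by omega
      rcases h3 with h3 | rfl
    -- i ≥ 3, mIS ≠ s
      · rw [chainBot_of_ne c m s i h3 (fun hh => h1 hh.symm)]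
      · rw [chainBot_two]
    · have : i = 2 := by omega
      subst this
      rw [chainBot_two]

lemma quot_mk_congr (c : ℤ → ℤ) (e m : ℤ) (x y : Tset c e m) (h : x.val = y.val) :
    Quot.mk (genRel c e m) x = Quot.mk (genRel c e m) y := by
  rw [Subtype.ext h]

section Main

variable (e : ℤ) (he : 4 ≤ e) (c : ℤ → ℤ)
  (hc : ∀ i, 2 ≤ i → i ≤ e - 1 → 2 ≤ c i)
  (m : ℤ) (hm : ∀ i, 2 ≤ i → i ≤ e - 1 → c i ≤ m)

include he hc hm

lemma mIS_one (i : ℤ) (h2 : 2 ≤ i) (hie : i ≤ e - 1) : mIS c m 1 i = c i - 1 := by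
  unfold mIS
  have := hc i h2 hie
  have := hm i h2 hie
  have := hc 2 le_rfl (by omega)
  have := hm 2 le_rfl (by omega)
  rw [mul_one]
  omega

lemma mem_one (i l : ℤ) (h2 : 2 ≤ i) (hie : i ≤ e - 1) (h1l : 1 ≤ l) (hl : l ≤ c i - 1) :
    (i, 1, l) ∈ Tset c e m := by
  have h2m : (2:ℤ) ≤ m := le_trans (hc 2 le_rfl (by omega)) (hm 2 le_rfl (by omega))
  refine ⟨h2, hie, le_rfl, ?_, h1l, ?_⟩
  · show 2 * (1:ℤ) - 1 ≤ m
    omega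
  · show l ≤ mIS c m 1 i
    rw [mIS_one e he c hc m hm i h2 hie]
    exact hl

lemma mk_chain : ∀ (n : ℕ) (i : ℤ), 2 ≤ i → i ≤ e - 1 → i ≤ 2 + n →
    ∀ (hx : ((i:ℤ),(1:ℤ),(1:ℤ)) ∈ Tset c e m) (hy : ((chainBot c m 1 i),(1:ℤ),(1:ℤ)) ∈ Tset c e m),
    Quot.mk (genRel c e m) ⟨(i,1,1), hx⟩
      = Quot.mk (genRel c e m) ⟨((chainBot c m 1 i),1,1), hy⟩ := by
  intro n
  induction n with
  | zero =>
    intro i h2 hie hn hx hy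
    have hi2 : i = 2 := by omega
    subst hi2
    exact quot_mk_congr c e m _ _ (congrArg (fun t => ((t:ℤ),(1:ℤ),(1:ℤ))) (chainBot_two c m 1).symm)
  | succ n ih =>
    intro i h2 hie hn hx hy
    by_cases hcb : mIS c m 1 i = 1 ∧ 3 ≤ i
    · obtain ⟨hmis, h3⟩ := hcb
      have h1 : chainBot c m 1 i = chainBot c m 1 (i - 1) := chainBot_of_eq c m 1 i h3 hmis
      have hci : 2 ≤ c (i-1) := hc (i-1) (by omega) (by omega)
      have hx' : ((i-1:ℤ),(1:ℤ),(1:ℤ)) ∈ Tset c e m :=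
        mem_one e he c hc m hm (i-1) 1 (by omega) (by omega) le_rfl (by omega)
      have hy' : ((chainBot c m 1 (i-1)),(1:ℤ),(1:ℤ)) ∈ Tset c e m := by
        rw [← h1]; exact hy
      have step : Quot.mk (genRel c e m) ⟨((i-1:ℤ),(1:ℤ),(1:ℤ)), hx'⟩
          = Quot.mk (genRel c e m) ⟨(i,1,1), hx⟩ := by
        apply Quot.sound
        refine ⟨i - 1, 1, by omega, by omega, rfl, ?_⟩
        have : i - 1 + 1 = i := by ring
        rw [this, hmis]
      rw [← step, ih (i-1) (by omega) (by omega) (by omega) hx' hy']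
      exact quot_mk_congr c e m _ _ (congrArg (fun t => ((t:ℤ),(1:ℤ),(1:ℤ))) h1.symm)
    · have hbi : chainBot c m 1 i = i := by
        rcases (not_and_or.1 hcb) with h1 | h2'
        · have h3 : 3 ≤ i ∨ i = 2 := by omega
          rcases h3 with h3 | rfl
          · exact chainBot_of_ne c m 1 i h3 h1
          · exact chainBot_two c m 1
        · have : i = 2 := by omega
          subst this
          exact chainBot_two c m 1
      exact quot_mk_congr c e m _ _ (congrArg (fun t => ((t:ℤ),(1:ℤ),(1:ℤ))) hbi.symm)

omit he hc hm in
lemma chainBot_spec (s i : ℤ) (h3 : 3 ≤ chainBot c m s i) :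
    mIS c m s (chainBot c m s i) ≠ s := by
  have hmem := Finset.max'_mem (insert 2 ((Finset.Icc 3 i).filter (fun k => mIS c m s k ≠ s)))
    (Finset.insert_nonempty _ _)
  rcases Finset.mem_insert.1 hmem with h | h
  · rw [show ((insert 2 ((Finset.Icc 3 i).filter (fun k => mIS c m s k ≠ s))).max'
      (Finset.insert_nonempty _ _)) = chainBot c m s i from rfl] at h
    omega
  · exact (Finset.mem_filter.1 h).2

lemma rep'_cases (i l : ℤ) (h : ((i:ℤ),(1:ℤ),l) ∈ Tset c e m) :
    (¬ (l = c i - 1 ∧ 3 ≤ i) ∧ rep' c m (i,1,l) = (i,1,l)) ∨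
    (l = c i - 1 ∧ 3 ≤ i ∧ rep' c m (i,1,l) = (chainBot c m 1 (i-1),1,1)) := by
  obtain ⟨h2, hie, -, -, -, -⟩ := h
  simp only at h2 hie
  have hmis : mIS c m 1 i = c i - 1 := mIS_one e he c hc m hm i h2 hie
  by_cases hcond : l = c i - 1 ∧ 3 ≤ i
  · right
    refine ⟨hcond.1, hcond.2, ?_⟩
    unfold rep'
    rw [if_pos (by simpa [hmis] using hcond)]
  · left
    refine ⟨hcond, ?_⟩
    unfold rep'
    rw [if_neg (by simpa [hmis] using hcond)]

lemma rep'_mem (i l : ℤ) (h : ((i:ℤ),(1:ℤ),l) ∈ Tset c e m) :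
    rep' c m (i,1,l) ∈ Tset c e m := by
  rcases rep'_cases e he c hc m hm i l h with ⟨-, heq⟩ | ⟨-, h3, heq⟩
  · rw [heq]; exact h
  · rw [heq]
    have hb1 := chainBot_ge c m 1 (i-1)
    have hb2 := chainBot_le c m 1 (i-1) (by obtain ⟨-, -, -, -, -, -⟩ := h; omega)
    have hie : i ≤ e - 1 := h.2.1
    have hcj : 2 ≤ c (chainBot c m 1 (i-1)) := hc _ hb1 (by omega)
    exact mem_one e he c hc m hm _ 1 hb1 (by omega) le_rfl (by omega)

lemma mk_rep' (i l : ℤ) (h : ((i:ℤ),(1:ℤ),l) ∈ Tset c e m)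
    (hy : rep' c m (i,1,l) ∈ Tset c e m) :
    Quot.mk (genRel c e m) ⟨(i,1,l), h⟩ = Quot.mk (genRel c e m) ⟨rep' c m (i,1,l), hy⟩ := by
  rcases rep'_cases e he c hc m hm i l h with ⟨-, heq⟩ | ⟨hl, h3, heq⟩
  · exact quot_mk_congr c e m _ _ heq.symm
  · have h2 : 2 ≤ i := h.1
    have hie : i ≤ e - 1 := h.2.1
    have hci : 2 ≤ c (i-1) := hc (i-1) (by omega) (by omega)
    have hx' : ((i-1:ℤ),(1:ℤ),(1:ℤ)) ∈ Tset c e m :=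
      mem_one e he c hc m hm (i-1) 1 (by omega) (by omega) le_rfl (by omega)
    have hy' : ((chainBot c m 1 (i-1)),(1:ℤ),(1:ℤ)) ∈ Tset c e m := by
      rw [← heq]; exact hy
    have step : Quot.mk (genRel c e m) ⟨((i-1:ℤ),(1:ℤ),(1:ℤ)), hx'⟩
        = Quot.mk (genRel c e m) ⟨(i,1,l), h⟩ := by
      apply Quot.sound
      refine ⟨i - 1, 1, by omega, by omega, rfl, ?_⟩
      have h4 : i - 1 + 1 = i := by ring
      rw [h4, mIS_one e he c hc m hm i h2 hie, ← hl]
    rw [← step,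
      mk_chain e he c hc m hm (i-3).toNat (i-1) (by omega) (by omega) (by omega) hx' hy']
    exact quot_mk_congr c e m _ _ heq.symm

/-- bound for the `l`-range of canonical representatives at level `i`. -/
def Fbnd (c : ℤ → ℤ) (i : ℤ) : ℤ := c i - 2 + if i = 2 then 1 else 0

/-- the set of canonical representatives with `s = 1`. -/
noncomputable def Fset (c : ℤ → ℤ) (e : ℤ) : Finset (ℤ × ℤ × ℤ) :=
  (Finset.Icc 2 (e-1)).biUnion (fun i => (Finset.Icc 1 (Fbnd c i)).image (fun l => (i, 1, l)))

omit he hc hm in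
lemma mem_Fset (y : ℤ × ℤ × ℤ) :
    y ∈ Fset c e ↔ ∃ i l : ℤ, (2 ≤ i ∧ i ≤ e - 1) ∧ (1 ≤ l ∧ l ≤ Fbnd c i) ∧ y = (i, 1, l) := by
  simp only [Fset, Finset.mem_biUnion, Finset.mem_image, Finset.mem_Icc]
  constructor
  · rintro ⟨i, hi, l, hl, rfl⟩
    exact ⟨i, l, hi, hl, rfl⟩
  · rintro ⟨i, l, hi, hl, rfl⟩
    exact ⟨i, hi, l, hl, rfl⟩

lemma Fset_sub (y : ℤ × ℤ × ℤ) (hy : y ∈ Fset c e) :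
    y ∈ Tset c e m ∧ y.2.1 = 1 ∧ rep' c m y = y := by
  rw [mem_Fset] at hy
  obtain ⟨i, l, ⟨h2, hie⟩, ⟨h1l, hlb⟩, rfl⟩ := hy
  have hci := hc i h2 hie
  have hlc : l ≤ c i - 1 := by
    unfold Fbnd at hlb
    by_cases h : i = 2
    · subst h; simp at hlb; omega
    · simp [h] at hlb; omega
  have hT : ((i:ℤ),(1:ℤ),l) ∈ Tset c e m := mem_one e he c hc m hm i l h2 hie h1l hlc
  refine ⟨hT, rfl, ?_⟩
  rcases rep'_cases e he c hc m hm i l hT with ⟨-, heq⟩ | ⟨hl', h3, -⟩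
  · exact heq
  · exfalso
    unfold Fbnd at hlb
    have : ¬ (i = 2) := by omega
    simp [this] at hlb
    omega

lemma rep'_mem_Fset (i l : ℤ) (h : ((i:ℤ),(1:ℤ),l) ∈ Tset c e m) :
    rep' c m (i, 1, l) ∈ Fset c e := by
  obtain ⟨h2, hie, -, -, h1l, hlm⟩ := h
  simp only at h2 hie h1l hlm
  have hlc : l ≤ c i - 1 := by
    rwa [mIS_one e he c hc m hm i h2 hie] at hlm
  have hT : ((i:ℤ),(1:ℤ),l) ∈ Tset c e m := mem_one e he c hc m hm i l h2 hie h1l hlc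
  rcases rep'_cases e he c hc m hm i l hT with ⟨hne, heq⟩ | ⟨hl', h3, heq⟩
  · rw [heq, mem_Fset]
    refine ⟨i, l, ⟨h2, hie⟩, ⟨h1l, ?_⟩, rfl⟩
    unfold Fbnd
    by_cases hi2 : i = 2
    · simp [hi2]
      subst hi2
      omega
    · simp [hi2]
      have h3 : 3 ≤ i := by omega
      have : l ≠ c i - 1 := fun hll => hne ⟨hll, h3⟩
      omega
  · rw [heq, mem_Fset]
    set j := chainBot c m 1 (i-1) with hj
    have hb1 := chainBot_ge c m 1 (i-1)
    have hb2 := chainBot_le c m 1 (i-1) (by omega)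
    have hcj := hc j hb1 (by omega)
    refine ⟨j, 1, ⟨hb1, by omega⟩, ⟨le_rfl, ?_⟩, rfl⟩
    unfold Fbnd
    by_cases hj2 : j = 2
    · simp [hj2]
      rw [hj2] at hcj
      omega
    · simp [hj2]
      have h3j : 3 ≤ j := by omega
      have hne := chainBot_spec c m 1 (i-1) (by rw [← hj]; omega)
      rw [← hj] at hne
      rw [mIS_one e he c hc m hm j hb1 (by omega)] at hne
      omega

lemma Fset_card : ((Fset c e).card : ℤ) = (∑ i ∈ Finset.Icc (2:ℤ) (e - 1), c i) - 2 * (e - 2) + 1 := by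
  have hdisj : ∀ i ∈ Finset.Icc (2:ℤ) (e-1), ∀ j ∈ Finset.Icc (2:ℤ) (e-1), i ≠ j →
      Disjoint ((Finset.Icc 1 (Fbnd c i)).image (fun l => ((i:ℤ), (1:ℤ), l)))
        ((Finset.Icc 1 (Fbnd c j)).image (fun l => ((j:ℤ), (1:ℤ), l))) := by
    intro i _ j _ hij
    rw [Finset.disjoint_left]
    rintro a ha hb
    obtain ⟨l1, -, rfl⟩ := Finset.mem_image.1 ha
    obtain ⟨l2, -, h⟩ := Finset.mem_image.1 hb
    exact hij (congrArg Prod.fst h).symm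
  have hcard : (Fset c e).card = ∑ i ∈ Finset.Icc (2:ℤ) (e-1), (Fbnd c i).toNat := by
    rw [Fset, Finset.card_biUnion hdisj]
    apply Finset.sum_congr rfl
    intro i _
    rw [Finset.card_image_of_injective _ (fun a b hab => (congrArg (fun t => t.2.2) hab : a = b)),
      Int.card_Icc]
    congr 1
    omega
  rw [hcard]
  push_cast
  have hnn : ∀ i ∈ Finset.Icc (2:ℤ) (e-1), ((Fbnd c i).toNat : ℤ) = Fbnd c i := by
    intro i hi
    rw [Finset.mem_Icc] at hi
    have := hc i hi.1 hi.2
    rw [Int.toNat_of_nonneg]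
    unfold Fbnd
    by_cases h : i = 2
    · subst h; simp; omega
    · simp [h]; omega
  rw [Finset.sum_congr rfl hnn]
  have hsplit : ∑ i ∈ Finset.Icc (2:ℤ) (e-1), Fbnd c i
      = (∑ i ∈ Finset.Icc (2:ℤ) (e-1), (c i - 2))
        + ∑ i ∈ Finset.Icc (2:ℤ) (e-1), (if i = 2 then (1:ℤ) else 0) := by
    rw [← Finset.sum_add_distrib]
    exact Finset.sum_congr rfl (fun i _ => rfl)
  rw [hsplit, Finset.sum_ite_eq' (Finset.Icc (2:ℤ) (e-1)) 2 (fun _ => (1:ℤ)),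
    if_pos (Finset.mem_Icc.2 ⟨le_rfl, by omega⟩), Finset.sum_sub_distrib,
    Finset.sum_const, Int.card_Icc]
  have : ((e - 1 + 1 - 2).toNat : ℤ) = e - 2 := by omega
  rw [← this]
  push_cast
  ring

end Main

/-- Corollary 4.20: for `m ≥ max{c_i}`, the number of equivalence classes of `T(m)`
with index of speciality `s = 1` equals `c_2 + ⋯ + c_{e-1} - 2(e-2) + 1`, the number of
exceptional divisors on the minimal resolution. -/
theorem card_speciality_one_classes (e : ℤ) (he : 4 ≤ e) (c : ℤ → ℤ)
    (hc : ∀ i, 2 ≤ i → i ≤ e - 1 → 2 ≤ c i)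
    (m : ℤ) (hm : ∀ i, 2 ≤ i → i ≤ e - 1 → c i ≤ m) :
    (Nat.card {q : Quot (genRel c e m) //
        ∃ x : Tset c e m, Quot.mk (genRel c e m) x = q ∧ (x : ℤ × ℤ × ℤ).2.1 = 1} : ℤ)
      = (∑ i ∈ Finset.Icc (2 : ℤ) (e - 1), c i) - 2 * (e - 2) + 1 := by
  classical
  set P : Quot (genRel c e m) → Prop :=
    fun q => ∃ x : Tset c e m, Quot.mk (genRel c e m) x = q ∧ (x : ℤ × ℤ × ℤ).2.1 = 1 with hP
  let g : Quot (genRel c e m) → ℤ × ℤ × ℤ :=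
    Quot.lift (fun a => rep' c m a.val) (rep'_invariant c e m)
  have hmemF : ∀ q : {q // P q}, g q.1 ∈ Fset c e := by
    rintro ⟨q, ⟨⟨⟨i, s, l⟩, hp⟩, hmk, hs⟩⟩
    have hs' : s = 1 := hs
    subst hs'
    show g q ∈ Fset c e
    rw [← hmk]
    exact rep'_mem_Fset e he c hc m hm i l hp
  let f : {q // P q} → ↥(Fset c e) := fun q => ⟨g q.1, hmemF q⟩
  have hinj : Function.Injective f := by
    rintro ⟨q1, hq1⟩ ⟨q2, hq2⟩ hf
    obtain ⟨⟨⟨i1, s1, l1⟩, hp1⟩, hmk1, hs1⟩ := hq1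
    obtain ⟨⟨⟨i2, s2, l2⟩, hp2⟩, hmk2, hs2⟩ := hq2
    have hs1' : s1 = 1 := hs1
    have hs2' : s2 = 1 := hs2
    subst hs1'; subst hs2'
    have hgg : g q1 = g q2 := congrArg Subtype.val hf
    rw [← hmk1, ← hmk2] at hgg
    have hgg' : rep' c m ((i1:ℤ), (1:ℤ), l1) = rep' c m ((i2:ℤ), (1:ℤ), l2) := hgg
    apply Subtype.ext
    show q1 = q2
    rw [← hmk1, ← hmk2,
      mk_rep' e he c hc m hm i1 l1 hp1 (rep'_mem e he c hc m hm i1 l1 hp1),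
      mk_rep' e he c hc m hm i2 l2 hp2 (rep'_mem e he c hc m hm i2 l2 hp2)]
    exact quot_mk_congr c e m _ _ hgg'
  have hsurj : Function.Surjective f := by
    rintro ⟨y, hy⟩
    obtain ⟨hT, hs, hfix⟩ := Fset_sub e he c hc m hm y hy
    refine ⟨⟨Quot.mk (genRel c e m) ⟨y, hT⟩, ⟨⟨y, hT⟩, rfl, hs⟩⟩, ?_⟩
    apply Subtype.ext
    exact hfix
  have h1 : Nat.card {q // P q} = Nat.card ↥(Fset c e) :=
    Nat.card_eq_of_bijective f ⟨hinj, hsurj⟩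
  rw [h1, Nat.card_eq_finsetCard]
  exact Fset_card e he c hc m hm
end
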